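/- arXiv:1403.4345 — 4 statements merged into one kernel-verified Lean document; each statement's English description precedes it below -/
import Mathlib

section
/- If two permutations v, w in S_n satisfy v(i) = w(i) for some index i, then v ≤ w in Bruhat order if and only if the flattened permutations of length n-1 obtained by deleting position i from v and from w satisfy the same Bruhat order relation. -/
open Finset


/-- One step of the Bruhat order: `w = v·t_{ij}` with `i < j` and `v(i) < v(j)`. -/
def BruhatStep {n : ℕ} (v w : Equiv.Perm (Fin n)) : Prop :=
  ∃ i j : Fin n, i < j ∧ v i < v j ∧ w = v * Equiv.swap i j

/-- Bruhat order on `S_n`: the reflexive-transitive closure of `BruhatStep`. -/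
def BruhatLE {n : ℕ} : Equiv.Perm (Fin n) → Equiv.Perm (Fin n) → Prop :=
  Relation.ReflTransGen BruhatStep

/-- Rank count: number of positions `j ≤ a` with `u j ≥ t`. -/
def rk {m : ℕ} (u : Equiv.Perm (Fin m)) (a t : ℕ) : ℕ :=
  ∑ j : Fin m, if (j : ℕ) ≤ a ∧ t ≤ (u j : ℕ) then 1 else 0

/-- Ehresmann dominance. -/
def Dom {m : ℕ} (u w : Equiv.Perm (Fin m)) : Prop :=
  ∀ a t : ℕ, rk u a t ≤ rk w a t

lemma sum_split_two {m : ℕ} (k l : Fin m) (hkl : k ≠ l) (g : Fin m → ℕ) :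
    ∑ j : Fin m, g j = g k + (g l + ∑ j ∈ (univ.erase k).erase l, g j) := by
  rw [Finset.add_sum_erase _ g (by simp [Ne.symm hkl] : l ∈ univ.erase k),
    Finset.add_sum_erase _ g (mem_univ k)]

lemma rk_swap {m : ℕ} (u : Equiv.Perm (Fin m)) {k l : Fin m} (hkl : k ≠ l) (a t : ℕ) :
    rk (u * Equiv.swap k l) a t
      + ((if (k : ℕ) ≤ a ∧ t ≤ (u k : ℕ) then 1 else 0)
        + (if (l : ℕ) ≤ a ∧ t ≤ (u l : ℕ) then 1 else 0))
    = rk u a t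
      + ((if (k : ℕ) ≤ a ∧ t ≤ (u l : ℕ) then 1 else 0)
        + (if (l : ℕ) ≤ a ∧ t ≤ (u k : ℕ) then 1 else 0)) := by
  unfold rk
  rw [sum_split_two k l hkl, sum_split_two k l hkl
    (fun j => if (j : ℕ) ≤ a ∧ t ≤ (u j : ℕ) then 1 else 0)]
  have hk : (u * Equiv.swap k l) k = u l := by
    simp [Equiv.Perm.mul_apply]
  have hl : (u * Equiv.swap k l) l = u k := by
    simp [Equiv.Perm.mul_apply]
  have htail : ∀ j ∈ (univ.erase k).erase l,
      (if (j : ℕ) ≤ a ∧ t ≤ ((u * Equiv.swap k l) j : ℕ) then 1 else 0)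
        = (if (j : ℕ) ≤ a ∧ t ≤ (u j : ℕ) then 1 else 0) := by
    intro j hj
    simp only [mem_erase, mem_univ, and_true] at hj
    rw [Equiv.Perm.mul_apply, Equiv.swap_apply_of_ne_of_ne hj.2 hj.1]
  rw [Finset.sum_congr rfl htail, hk, hl]
  omega

lemma rk_mul_swap {m : ℕ} (u : Equiv.Perm (Fin m)) {k l : Fin m} (hkl : k < l)
    (hval : u k < u l) (a t : ℕ) :
    rk (u * Equiv.swap k l) a t
      = rk u a t + (if (k : ℕ) ≤ a ∧ ¬ (l : ℕ) ≤ a ∧ (u k : ℕ) < t ∧ t ≤ (u l : ℕ)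
          then 1 else 0) := by
  have base := rk_swap u (ne_of_lt hkl) a t
  have h1 : (k : ℕ) < (l : ℕ) := hkl
  have h2 : (u k : ℕ) < (u l : ℕ) := hval
  split_ifs at base ⊢ <;> omega

lemma rk_le_of_step {m : ℕ} {u u' : Equiv.Perm (Fin m)} (h : BruhatStep u u') (a t : ℕ) :
    rk u a t ≤ rk u' a t := by
  obtain ⟨k, l, hkl, hval, rfl⟩ := h
  rw [rk_mul_swap u hkl hval a t]
  omega

lemma bruhatLE_dom {m : ℕ} {u w : Equiv.Perm (Fin m)} (h : BruhatLE u w) : Dom u w := by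
  induction h with
  | refl => exact fun a t => le_rfl
  | tail _ hstep ih => exact fun a t => (ih a t).trans (rk_le_of_step hstep a t)


lemma rk_point {m : ℕ} (u w : Equiv.Perm (Fin m)) (k : Fin m)
    (hagree : ∀ j : Fin m, (j : ℕ) < (k : ℕ) → u j = w j) (t : ℕ) :
    rk u (k : ℕ) t + (if t ≤ (w k : ℕ) then 1 else 0)
      = rk w (k : ℕ) t + (if t ≤ (u k : ℕ) then 1 else 0) := by
  unfold rk
  rw [← Finset.add_sum_erase univ (fun j : Fin m => if (j : ℕ) ≤ (k : ℕ) ∧ t ≤ (u j : ℕ) then 1 else 0)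
      (mem_univ k),
    ← Finset.add_sum_erase univ (fun j : Fin m => if (j : ℕ) ≤ (k : ℕ) ∧ t ≤ (w j : ℕ) then 1 else 0)
      (mem_univ k)]
  have htail : ∀ j ∈ univ.erase k,
      (if (j : ℕ) ≤ (k : ℕ) ∧ t ≤ (u j : ℕ) then 1 else 0)
        = (if (j : ℕ) ≤ (k : ℕ) ∧ t ≤ (w j : ℕ) then 1 else 0) := by
    intro j hj
    simp only [mem_erase, mem_univ, and_true] at hj
    have hvne : (j : ℕ) ≠ (k : ℕ) := fun hh => hj (Fin.ext hh)
    by_cases hja : (j : ℕ) < (k : ℕ)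
    · rw [hagree j hja]
    · have hle : ¬ (j : ℕ) ≤ (k : ℕ) := by omega
      simp [hle]
  rw [Finset.sum_congr rfl htail]
  split_ifs <;> omega

lemma exists_step {m : ℕ} {u w : Equiv.Perm (Fin m)} (hd : Dom u w) (hne : u ≠ w) :
    ∃ u', BruhatStep u u' ∧ Dom u' w ∧ (∀ a t, rk u a t ≤ rk u' a t) ∧
      ∃ a t, a < m ∧ t < m + 1 ∧ rk u a t < rk u' a t := by
  classical
  -- the first position where u and w differ
  have hS : (univ.filter fun j : Fin m => u j ≠ w j).Nonempty := by
    by_contra hcon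
    rw [Finset.not_nonempty_iff_eq_empty, Finset.filter_eq_empty_iff] at hcon
    exact hne (Equiv.ext fun j => not_not.mp (hcon (mem_univ j)))
  set S := univ.filter fun j : Fin m => u j ≠ w j with hSdef
  set k := S.min' hS with hkdef
  have hkS : k ∈ S := Finset.min'_mem S hS
  rw [hSdef, mem_filter] at hkS
  have hkne : u k ≠ w k := hkS.2
  have hkfirst : ∀ j : Fin m, (j : ℕ) < (k : ℕ) → u j = w j := by
    intro j hj
    by_contra hcon
    have hjS : j ∈ S := by rw [hSdef, mem_filter]; exact ⟨mem_univ j, hcon⟩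
    have := Finset.min'_le S j hjS
    rw [← hkdef] at this
    exact absurd hj (by omega : ¬ (j : ℕ) < (k : ℕ))
  have hkvne : (u k : ℕ) ≠ (w k : ℕ) := fun hh => hkne (Fin.ext hh)
  have hkval : (u k : ℕ) < (w k : ℕ) := by
    have hpt := rk_point u w k hkfirst (u k : ℕ)
    have hdd := hd (k : ℕ) (u k : ℕ)
    split_ifs at hpt <;> omega
  -- the candidate set and minimal l
  have hT : (univ.filter fun j : Fin m =>
      (k : ℕ) < (j : ℕ) ∧ (u k : ℕ) < (u j : ℕ) ∧ (u j : ℕ) ≤ (w k : ℕ)).Nonempty := by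
    refine ⟨u.symm (w k), ?_⟩
    have hj₀ : u (u.symm (w k)) = w k := u.apply_symm_apply (w k)
    have h1 : u.symm (w k) ≠ k := by
      intro hh; rw [hh] at hj₀; exact hkne hj₀
    have h1' : ((u.symm (w k) : Fin m) : ℕ) ≠ (k : ℕ) := fun hh => h1 (Fin.ext hh)
    have h2 : ¬ ((u.symm (w k) : Fin m) : ℕ) < (k : ℕ) := by
      intro hh
      have := hkfirst _ hh
      rw [hj₀] at this
      exact h1 (w.injective this.symm)
    rw [mem_filter]
    exact ⟨mem_univ _, by omega, by rw [hj₀]; omega, by rw [hj₀]⟩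
  set T := univ.filter fun j : Fin m =>
      (k : ℕ) < (j : ℕ) ∧ (u k : ℕ) < (u j : ℕ) ∧ (u j : ℕ) ≤ (w k : ℕ) with hTdef
  set l := T.min' hT with hldef
  have hlT : l ∈ T := Finset.min'_mem T hT
  rw [hTdef, mem_filter] at hlT
  obtain ⟨-, hkl', hul1, hul2⟩ := hlT
  have hlmin : ∀ j : Fin m, (k : ℕ) < (j : ℕ) → (j : ℕ) < (l : ℕ) →
      (u j : ℕ) ≤ (u k : ℕ) ∨ (w k : ℕ) < (u j : ℕ) := by
    intro j h1 h2
    by_contra hcon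
    push_neg at hcon
    have hjT : j ∈ T := by
      rw [hTdef, mem_filter]; exact ⟨mem_univ j, h1, by omega, by omega⟩
    have := Finset.min'_le T j hjT
    rw [← hldef] at this
    omega
  have hklF : k < l := by rw [Fin.lt_def]; exact hkl'
  have huvF : u k < u l := by rw [Fin.lt_def]; exact hul1
  refine ⟨u * Equiv.swap k l, ⟨k, l, hklF, huvF, rfl⟩, ?_, ?_, ?_⟩
  · -- dominance
    intro a t
    rw [rk_mul_swap u hklF huvF a t]
    by_cases hcond : (k : ℕ) ≤ a ∧ ¬ (l : ℕ) ≤ a ∧ (u k : ℕ) < t ∧ t ≤ (u l : ℕ)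
    swap
    · rw [if_neg hcond]; exact hd a t
    rw [if_pos hcond]
    obtain ⟨hka, hla, htk, htl⟩ := hcond
    -- crux claim
    have key : ∀ j : Fin m, (k : ℕ) < (j : ℕ) → (j : ℕ) ≤ a → t ≤ (u j : ℕ) →
        (w k : ℕ) + 1 ≤ (u j : ℕ) := by
      intro j h1 h2 h3
      rcases hlmin j h1 (by omega) with h | h <;> omega
    have hsplit : ∀ g : Fin m → ℕ, ∑ j : Fin m, g j
        = ∑ j ∈ univ.filter (fun j : Fin m => (k : ℕ) < (j : ℕ)), g j
          + ∑ j ∈ univ.filter (fun j : Fin m => ¬ (k : ℕ) < (j : ℕ)), g j :=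
      fun g => (Finset.sum_filter_add_sum_filter_not univ _ g).symm
    set P := univ.filter (fun j : Fin m => (k : ℕ) < (j : ℕ)) with hPdef
    set Pc := univ.filter (fun j : Fin m => ¬ (k : ℕ) < (j : ℕ)) with hPcdef
    have hkPc : k ∈ Pc := by rw [hPcdef, mem_filter]; exact ⟨mem_univ k, by omega⟩
    -- head equality
    have head_eq : ∑ j ∈ Pc, (if (j : ℕ) ≤ a ∧ t ≤ (u j : ℕ) then 1 else 0) + 1
        = ∑ j ∈ Pc, (if (j : ℕ) ≤ a ∧ t ≤ (w j : ℕ) then 1 else 0) := by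
      rw [← Finset.add_sum_erase Pc (fun j : Fin m => if (j : ℕ) ≤ a ∧ t ≤ (u j : ℕ) then 1 else 0) hkPc,
        ← Finset.add_sum_erase Pc (fun j : Fin m => if (j : ℕ) ≤ a ∧ t ≤ (w j : ℕ) then 1 else 0) hkPc]
      have htail : ∀ j ∈ Pc.erase k,
          (if (j : ℕ) ≤ a ∧ t ≤ (u j : ℕ) then 1 else 0)
            = (if (j : ℕ) ≤ a ∧ t ≤ (w j : ℕ) then 1 else 0) := by
        intro j hj
        rw [mem_erase] at hj
        obtain ⟨hjk, hjPc⟩ := hj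
        rw [hPcdef, mem_filter] at hjPc
        have : (j : ℕ) ≠ (k : ℕ) := fun hh => hjk (Fin.ext hh)
        rw [hkfirst j (by omega)]
      rw [Finset.sum_congr rfl htail, if_neg (by omega : ¬ ((k : ℕ) ≤ a ∧ t ≤ (u k : ℕ))),
        if_pos (⟨hka, by omega⟩ : (k : ℕ) ≤ a ∧ t ≤ (w k : ℕ))]
      omega
    have h2 : ∑ j ∈ P, (if (j : ℕ) ≤ a ∧ t ≤ (u j : ℕ) then 1 else 0)
        ≤ ∑ j ∈ P, (if (j : ℕ) ≤ a ∧ (w k : ℕ) + 1 ≤ (u j : ℕ) then 1 else 0) := by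
      refine Finset.sum_le_sum fun j hj => ?_
      rw [hPdef, mem_filter] at hj
      by_cases c1 : (j : ℕ) ≤ a ∧ t ≤ (u j : ℕ)
      · rw [if_pos c1, if_pos ⟨c1.1, key j hj.2 c1.1 c1.2⟩]
      · rw [if_neg c1]; exact Nat.zero_le _
    have h3 : ∑ j ∈ Pc, (if (j : ℕ) ≤ a ∧ (w k : ℕ) + 1 ≤ (u j : ℕ) then 1 else 0)
        = ∑ j ∈ Pc, (if (j : ℕ) ≤ a ∧ (w k : ℕ) + 1 ≤ (w j : ℕ) then 1 else 0) := by
      refine Finset.sum_congr rfl fun j hj => ?_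
      rw [hPcdef, mem_filter] at hj
      by_cases hjk : j = k
      · subst hjk
        rw [if_neg (by omega), if_neg (by omega)]
      · have : (j : ℕ) ≠ (k : ℕ) := fun hh => hjk (Fin.ext hh)
        rw [hkfirst j (by omega)]
    have h4 : ∑ j ∈ P, (if (j : ℕ) ≤ a ∧ (w k : ℕ) + 1 ≤ (w j : ℕ) then 1 else 0)
        ≤ ∑ j ∈ P, (if (j : ℕ) ≤ a ∧ t ≤ (w j : ℕ) then 1 else 0) := by
      refine Finset.sum_le_sum fun j hj => ?_
      by_cases c1 : (j : ℕ) ≤ a ∧ (w k : ℕ) + 1 ≤ (w j : ℕ)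
      · rw [if_pos c1, if_pos ⟨c1.1, by omega⟩]
      · rw [if_neg c1]; exact Nat.zero_le _
    have hdWK := hd a ((w k : ℕ) + 1)
    unfold rk at hdWK ⊢
    rw [hsplit (fun j : Fin m => if (j : ℕ) ≤ a ∧ (w k : ℕ) + 1 ≤ (u j : ℕ) then 1 else 0),
      hsplit (fun j : Fin m => if (j : ℕ) ≤ a ∧ (w k : ℕ) + 1 ≤ (w j : ℕ) then 1 else 0)] at hdWK
    rw [hsplit (fun j : Fin m => if (j : ℕ) ≤ a ∧ t ≤ (u j : ℕ) then 1 else 0),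
      hsplit (fun j : Fin m => if (j : ℕ) ≤ a ∧ t ≤ (w j : ℕ) then 1 else 0)]
    omega
  · intro a t
    rw [rk_mul_swap u hklF huvF a t]
    omega
  · refine ⟨(k : ℕ), (u k : ℕ) + 1, k.isLt, by have := (u k).isLt; omega, ?_⟩
    rw [rk_mul_swap u hklF huvF (k : ℕ) ((u k : ℕ) + 1),
      if_pos ⟨le_rfl, by omega, by omega, by omega⟩]
    omega


/-- The gap measure. -/
def gap {m : ℕ} (u w : Equiv.Perm (Fin m)) : ℕ :=
  ∑ p ∈ (Finset.range m) ×ˢ (Finset.range (m + 1)), (rk w p.1 p.2 - rk u p.1 p.2)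

lemma gap_lt {m : ℕ} {u u' w : Equiv.Perm (Fin m)}
    (hmono : ∀ a t, rk u a t ≤ rk u' a t) (hdom : Dom u' w)
    (hstrict : ∃ a t, a < m ∧ t < m + 1 ∧ rk u a t < rk u' a t) :
    gap u' w < gap u w := by
  obtain ⟨a, t, ha, ht, hstr⟩ := hstrict
  refine Finset.sum_lt_sum (fun p _ => Nat.sub_le_sub_left (hmono p.1 p.2) _) ?_
  refine ⟨(a, t), by rw [Finset.mem_product]; exact ⟨mem_range.mpr ha, mem_range.mpr ht⟩, ?_⟩
  have h1 := hdom a t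
  show rk w a t - rk u' a t < rk w a t - rk u a t
  omega

lemma dom_bruhatLE {m : ℕ} {u w : Equiv.Perm (Fin m)} (hd : Dom u w) : BruhatLE u w := by
  by_cases hne : u = w
  · subst hne; exact Relation.ReflTransGen.refl
  · have hgap : gap u w ≤ gap u w := le_rfl
    generalize hN : gap u w = N at hgap
    clear hgap
    induction N using Nat.strong_induction_on generalizing u with
    | _ N ih =>
      obtain ⟨u', hstep, hdom', hmono, hstrict⟩ := exists_step hd hne
      have hlt : gap u' w < N := hN ▸ gap_lt hmono hdom' hstrict
      by_cases hne' : u' = w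
      · subst hne'; exact Relation.ReflTransGen.single hstep
      · exact Relation.ReflTransGen.head hstep (ih (gap u' w) hlt hdom' hne' rfl)


lemma card_lt_filter {q : ℕ} (f : Fin q → Fin q) (hf : Function.Injective f) (a : Fin q) :
    (univ.filter fun x => f x < f a).card = (f a : ℕ) := by
  have himg : (univ.filter fun x => f x < f a).image f = univ.filter (fun y => y < f a) := by
    ext y
    simp only [Finset.mem_image, mem_filter, mem_univ, true_and]
    constructor
    · rintro ⟨x, hx, rfl⟩; exact hx
    · intro hy
      obtain ⟨x, rfl⟩ := Finite.injective_iff_surjective.mp hf y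
      exact ⟨x, hy, rfl⟩
  have h1 : (univ.filter fun x => f x < f a).card = (univ.filter fun y => y < f a).card := by
    rw [← himg, Finset.card_image_of_injective _ hf]
  rw [h1, show (univ.filter fun y : Fin q => y < f a) = Finset.Iio (f a) by ext y; simp,
    Fin.card_Iio]

lemma pattern_eq {q : ℕ} (f g : Fin q → Fin q) (hf : Function.Injective f)
    (hg : Function.Injective g) (hp : ∀ a b, f a < f b ↔ g a < g b) : f = g := by
  funext a
  have h1 := card_lt_filter f hf a
  have h2 := card_lt_filter g hg a
  have h3 : (univ.filter fun x => f x < f a) = (univ.filter fun x => g x < g a) := by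
    ext x; simp only [mem_filter, mem_univ, true_and]; exact hp x a
  exact Fin.ext (by rw [← h1, ← h2, h3])

-- PART 4b : the deletion representation

lemma del_repr {n : ℕ} (v : Equiv.Perm (Fin (n + 1))) (i : Fin (n + 1))
    (dv : Equiv.Perm (Fin n))
    (hdv : ∀ a b : Fin n, dv a < dv b ↔ v (i.succAbove a) < v (i.succAbove b)) :
    ∀ b, (v i).succAbove (dv b) = v (i.succAbove b) := by
  classical
  have hne : ∀ b : Fin n, v (i.succAbove b) ≠ v i :=
    fun b => v.injective.ne (Fin.succAbove_ne i b)
  choose g hg using fun b : Fin n => Fin.exists_succAbove_eq (hne b)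
  have hginj : Function.Injective g := by
    intro a b hab
    have : v (i.succAbove a) = v (i.succAbove b) := by rw [← hg a, ← hg b, hab]
    exact Fin.succAbove_right_injective (v.injective this)
  have hpat : ∀ a b, (dv : Fin n → Fin n) a < dv b ↔ g a < g b := by
    intro a b
    rw [hdv a b, ← hg a, ← hg b, (Fin.strictMono_succAbove (v i)).lt_iff_lt]
  have := pattern_eq (dv : Fin n → Fin n) g dv.injective hginj hpat
  intro b
  rw [show dv b = g b from congrFun this b, hg b]


lemma rk_del {n : ℕ} (u : Equiv.Perm (Fin (n + 1))) (i : Fin (n + 1))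
    (du : Equiv.Perm (Fin n))
    (hu : ∀ b, (u i).succAbove (du b) = u (i.succAbove b)) (a' t' : Fin n) :
    rk du (a' : ℕ) (t' : ℕ)
      + (if (i : ℕ) ≤ (i.succAbove a' : ℕ) ∧ ((u i).succAbove t' : ℕ) ≤ (u i : ℕ)
          then 1 else 0)
    = rk u (i.succAbove a' : ℕ) ((u i).succAbove t' : ℕ) := by
  unfold rk
  rw [Fin.sum_univ_succAbove (fun j : Fin (n + 1) =>
    if (j : ℕ) ≤ (i.succAbove a' : ℕ) ∧ ((u i).succAbove t' : ℕ) ≤ (u j : ℕ) then 1 else 0) i]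
  have hterm : ∀ b : Fin n,
      (if ((i.succAbove b : Fin (n + 1)) : ℕ) ≤ (i.succAbove a' : ℕ)
          ∧ ((u i).succAbove t' : ℕ) ≤ (u (i.succAbove b) : ℕ) then 1 else 0)
      = (if (b : ℕ) ≤ (a' : ℕ) ∧ (t' : ℕ) ≤ (du b : ℕ) then 1 else 0) := by
    intro b
    have e1 : ((i.succAbove b : Fin (n + 1)) : ℕ) ≤ (i.succAbove a' : ℕ) ↔ (b : ℕ) ≤ (a' : ℕ) := by
      rw [← Fin.le_def, ← Fin.le_def, (Fin.strictMono_succAbove i).le_iff_le]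
    have e2 : ((u i).succAbove t' : ℕ) ≤ (u (i.succAbove b) : ℕ) ↔ (t' : ℕ) ≤ (du b : ℕ) := by
      rw [← hu b, ← Fin.le_def, ← Fin.le_def, (Fin.strictMono_succAbove (u i)).le_iff_le]
    exact if_congr (and_congr e1 e2) rfl rfl
  rw [Finset.sum_congr rfl (fun b _ => hterm b)]
  exact Nat.add_comm _ _

lemma rk_eq_of_all {q : ℕ} (u : Equiv.Perm (Fin q)) (a t : ℕ) (ha : ∀ j : Fin q, (j : ℕ) ≤ a) :
    rk u a t = (univ.filter fun y : Fin q => t ≤ (y : ℕ)).card := by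
  unfold rk
  calc ∑ j : Fin q, (if (j : ℕ) ≤ a ∧ t ≤ (u j : ℕ) then 1 else 0)
      = ∑ j : Fin q, (if t ≤ (u j : ℕ) then 1 else 0) :=
        Finset.sum_congr rfl (fun j _ => by simp [ha j])
    _ = (univ.filter fun j : Fin q => t ≤ (u j : ℕ)).card := (Finset.card_filter _ _).symm
    _ = ((univ.filter fun j : Fin q => t ≤ (u j : ℕ)).image u).card :=
        (Finset.card_image_of_injective _ u.injective).symm
    _ = (univ.filter fun y : Fin q => t ≤ (y : ℕ)).card := by
        congr 1
        ext y
        simp only [Finset.mem_image, mem_filter, mem_univ, true_and]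
        constructor
        · rintro ⟨x, hx, rfl⟩; exact hx
        · intro hy
          obtain ⟨x, rfl⟩ := u.surjective y
          exact ⟨x, hy, rfl⟩

lemma dom_del {n : ℕ} (v w : Equiv.Perm (Fin (n + 1))) (i : Fin (n + 1)) (h : v i = w i)
    (dv dw : Equiv.Perm (Fin n))
    (hv : ∀ b, (v i).succAbove (dv b) = v (i.succAbove b))
    (hw : ∀ b, (w i).succAbove (dw b) = w (i.succAbove b))
    (hd : Dom v w) : Dom dv dw := by
  intro a t
  by_cases ht : t < n
  swap
  · have hz : rk dv a t = 0 :=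
      Finset.sum_eq_zero fun j _ => if_neg (fun hc => by have := (dv j).isLt; omega)
    rw [hz]
    exact Nat.zero_le _
  by_cases ha : a < n
  swap
  · rw [rk_eq_of_all dv a t (fun j => by have := j.isLt; omega),
      rk_eq_of_all dw a t (fun j => by have := j.isLt; omega)]
  · have h1 := rk_del v i dv hv ⟨a, ha⟩ ⟨t, ht⟩
    have h2 := rk_del w i dw hw ⟨a, ha⟩ ⟨t, ht⟩
    rw [h] at h1
    simp only [Fin.val_mk] at h1 h2
    have h3 := hd ((i.succAbove ⟨a, ha⟩ : Fin (n + 1)) : ℕ)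
      (((w i).succAbove ⟨t, ht⟩ : Fin (n + 1)) : ℕ)
    omega


lemma succAbove_swap {n : ℕ} (i : Fin (n + 1)) (a b c : Fin n) :
    Equiv.swap (i.succAbove a) (i.succAbove b) (i.succAbove c)
      = i.succAbove (Equiv.swap a b c) := by
  rcases eq_or_ne c a with rfl | hca
  · rw [Equiv.swap_apply_left, Equiv.swap_apply_left]
  rcases eq_or_ne c b with rfl | hcb
  · rw [Equiv.swap_apply_right, Equiv.swap_apply_right]
  · rw [Equiv.swap_apply_of_ne_of_ne (Fin.succAbove_right_injective.ne hca)
      (Fin.succAbove_right_injective.ne hcb), Equiv.swap_apply_of_ne_of_ne hca hcb]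

lemma lift_chain {n : ℕ} (i : Fin (n + 1)) (p : Fin (n + 1))
    {d d' : Equiv.Perm (Fin n)} (hchain : Relation.ReflTransGen BruhatStep d d') :
    ∀ u : Equiv.Perm (Fin (n + 1)), u i = p →
      (∀ b, p.succAbove (d b) = u (i.succAbove b)) →
      ∃ u', Relation.ReflTransGen BruhatStep u u' ∧ u' i = p ∧
        (∀ b, p.succAbove (d' b) = u' (i.succAbove b)) := by
  induction hchain with
  | refl => exact fun u h1 h2 => ⟨u, Relation.ReflTransGen.refl, h1, h2⟩
  | tail _ hstep ih =>
    intro u h1 h2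
    obtain ⟨u₁, hchain₁, hu₁i, hu₁⟩ := ih u h1 h2
    obtain ⟨a, b, hab, hval, rfl⟩ := hstep
    refine ⟨u₁ * Equiv.swap (i.succAbove a) (i.succAbove b),
      hchain₁.tail ⟨i.succAbove a, i.succAbove b, Fin.strictMono_succAbove i hab, ?_, rfl⟩,
      ?_, ?_⟩
    · rw [← hu₁ a, ← hu₁ b]
      exact Fin.strictMono_succAbove p hval
    · rw [Equiv.Perm.mul_apply,
        Equiv.swap_apply_of_ne_of_ne (Fin.succAbove_ne i a).symm (Fin.succAbove_ne i b).symm,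
        hu₁i]
    · intro c
      rw [Equiv.Perm.mul_apply, Equiv.Perm.mul_apply, succAbove_swap, ← hu₁ (Equiv.swap a b c)]


/-- If `v(i) = w(i)` for some position `i`, then `v ≤ w` in Bruhat order iff the flattened
permutations obtained by deleting position `i` from `v` and from `w` satisfy the same relation.
Here `dv` (resp. `dw`) is the flattening of `v` (resp. `w`) with position `i` deleted:
it has the same relative order as the values of `v` (resp. `w`) on positions other than `i`. -/
theorem bruhat_iff_bruhat_of_delete (n : ℕ) (v w : Equiv.Perm (Fin (n + 1)))
    (i : Fin (n + 1)) (h : v i = w i)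
    (dv dw : Equiv.Perm (Fin n))
    (hdv : ∀ a b : Fin n, dv a < dv b ↔ v (i.succAbove a) < v (i.succAbove b))
    (hdw : ∀ a b : Fin n, dw a < dw b ↔ w (i.succAbove a) < w (i.succAbove b)) :
    BruhatLE v w ↔ BruhatLE dv dw := by
  have hv := del_repr v i dv hdv
  have hw := del_repr w i dw hdw
  constructor
  · intro hvw
    exact dom_bruhatLE (dom_del v w i h dv dw hv hw (bruhatLE_dom hvw))
  · intro hdd
    obtain ⟨u', hchain, hui, hrepr⟩ :=
      lift_chain i (v i) (hdd : Relation.ReflTransGen BruhatStep dv dw) v rfl hv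
    have heq : u' = w := by
      apply Equiv.ext
      intro j
      rcases eq_or_ne j i with rfl | hj
      · rw [hui, h]
      · obtain ⟨b, rfl⟩ := Fin.exists_succAbove_eq hj
        rw [← hrepr b, h]
        exact hw b
    rw [heq] at hchain
    exact hchain
end

section
/- The number of permutations in S_n avoiding both patterns 321 and 3412 equals the Fibonacci number F_{2n-1}, where F_1 = F_2 = 1. -/
/-- `w` contains the pattern `v` if some subsequence of `w` has the same relative order as `v`. -/
def Contains {n m : ℕ} (w : Equiv.Perm (Fin n)) (v : Equiv.Perm (Fin m)) : Prop :=
  ∃ f : Fin m → Fin n, StrictMono f ∧ ∀ a b : Fin m, v a < v b ↔ w (f a) < w (f b)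

/-- The pattern 321 (one-line notation). -/
def p321 : Equiv.Perm (Fin 3) := ⟨![2, 1, 0], ![2, 1, 0], by decide, by decide⟩

/-- The pattern 3412 (one-line notation). -/
def p3412 : Equiv.Perm (Fin 4) := ⟨![2, 3, 0, 1], ![2, 3, 0, 1], by decide, by decide⟩

open Equiv
lemma contains321_iff {n : ℕ} (w : Perm (Fin n)) :
    Contains w p321 ↔ ∃ i j k : Fin n, i < j ∧ j < k ∧ w k < w j ∧ w j < w i := by
  constructor
  · rintro ⟨f, hf, hv⟩
    exact ⟨f 0, f 1, f 2, hf (by decide), hf (by decide),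
      (hv 2 1).mp (by decide), (hv 1 0).mp (by decide)⟩
  · rintro ⟨i, j, k, hij, hjk, h1, h2⟩
    refine ⟨![i, j, k], ?_, ?_⟩
    · intro a b hab
      fin_cases a <;> fin_cases b <;> simp_all <;> omega
    · intro a b
      fin_cases a <;> fin_cases b <;>
        simp [p321, Matrix.cons_val_zero, Matrix.cons_val_one] <;> omega

lemma contains3412_iff {n : ℕ} (w : Perm (Fin n)) :
    Contains w p3412 ↔ ∃ i j k l : Fin n, i < j ∧ j < k ∧ k < l ∧
      w k < w l ∧ w l < w i ∧ w i < w j := by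
  constructor
  · rintro ⟨f, hf, hv⟩
    exact ⟨f 0, f 1, f 2, f 3, hf (by decide), hf (by decide), hf (by decide),
      (hv 2 3).mp (by decide), (hv 3 0).mp (by decide), (hv 0 1).mp (by decide)⟩
  · rintro ⟨i, j, k, l, hij, hjk, hkl, h1, h2, h3⟩
    refine ⟨![i, j, k, l], ?_, ?_⟩
    · intro a b hab
      fin_cases a <;> fin_cases b <;> simp_all <;> omega
    · intro a b
      fin_cases a <;> fin_cases b <;>
        simp [p3412, Matrix.cons_val_zero, Matrix.cons_val_one] <;> omega

def Booln {n : ℕ} (w : Perm (Fin n)) : Prop := ¬ Contains w p321 ∧ ¬ Contains w p3412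

section Structure
variable {n : ℕ} (w : Perm (Fin n)) (hw : Booln w) (k : Fin n)
  (hk : (w k).val = n - 1)

include hw hk in
/-- tail increasing -/
lemma tail_mono : ∀ i j : Fin n, k < i → i < j → w i < w j := by
  intro i j hki hij
  by_contra h
  push_neg at h
  have hne : w i ≠ w j := fun he => Fin.ne_of_lt hij (w.injective he)
  have h2 : w j < w i := lt_of_le_of_ne h (Ne.symm hne)
  have hwi : w i < w k := by
    have hne2 : w i ≠ w k := fun he => Fin.ne_of_lt hki (Eq.symm (w.injective he))
    have h5 := (w i).isLt
    have h6 : (w i).val ≠ (w k).val := fun hh => hne2 (Fin.ext hh)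
    rw [Fin.lt_def]
    omega
  exact hw.1 ((contains321_iff w).mpr ⟨k, i, j, hki, hij, h2, hwi⟩)

include hw hk in
/-- every value in [k+1, n-2] sits at a position > k -/
lemma mid_val_pos : ∀ v : Fin n, k.val + 1 ≤ v.val → v.val ≤ n - 2 → k < w.symm v := by
  intro v hv1 hv2
  by_contra hq
  push_neg at hq
  have hwq : w (w.symm v) = v := w.apply_symm_apply v
  have hqk : w.symm v ≠ k := by
    intro he; rw [he] at hwq
    have := congrArg Fin.val hwq; rw [hk] at this; omega
  have hqk' : w.symm v < k := lt_of_le_of_ne hq hqk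
  classical
  set A : Finset (Fin n) := Finset.Iic ⟨k.val, k.isLt⟩ with hA
  set B : Finset (Fin n) := A.filter (fun x => (w.symm x).val ≤ k.val) with hB
  have hAcard : A.card = k.val + 1 := by rw [hA, Fin.card_Iic]
  have hBcard : B.card ≤ k.val - 1 := by
    have hsub : ∀ x ∈ B, w.symm x ∈ (A.erase (w.symm v)).erase k := by
      intro x hx
      rw [hB, Finset.mem_filter] at hx
      obtain ⟨hxA, hxle⟩ := hx
      rw [hA, Finset.mem_Iic] at hxA
      have hxkv : x.val ≤ k.val := hxA
      refine Finset.mem_erase.mpr ⟨?_, Finset.mem_erase.mpr ⟨?_, ?_⟩⟩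
      · intro he
        have h3 := congrArg w he
        rw [w.apply_symm_apply] at h3
        have := congrArg Fin.val h3; rw [hk] at this; omega
      · intro he
        have h3 := congrArg w he
        rw [w.apply_symm_apply, hwq] at h3
        rw [h3] at hxkv; omega
      · rw [hA, Finset.mem_Iic]
        exact hxle
    have hinj : Set.InjOn (fun x => w.symm x) B := fun x _ y _ he => w.symm.injective he
    have hle := Finset.card_le_card_of_injOn _ hsub hinj
    have hm1 : (w.symm v) ∈ A := by
      rw [hA, Finset.mem_Iic]; exact le_of_lt hqk'
    have hm2 : k ∈ A.erase (w.symm v) :=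
      Finset.mem_erase.mpr ⟨Ne.symm (Fin.ne_of_lt hqk'), by rw [hA, Finset.mem_Iic]⟩
    rw [Finset.card_erase_of_mem hm2, Finset.card_erase_of_mem hm1, hAcard] at hle
    omega
  have hdiff : 2 ≤ (A \ B).card := by
    have hss : B ⊆ A := by rw [hB]; exact Finset.filter_subset _ _
    rw [Finset.card_sdiff_of_subset hss]
    have hkpos : 1 ≤ k.val := by
      have := hqk'; rw [Fin.lt_def] at this; omega
    omega
  obtain ⟨a, ha, b, hb, hab⟩ := Finset.one_lt_card.mp (by omega : 1 < (A \ B).card)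
  have key : ∀ a b : Fin n, a ∈ A \ B → b ∈ A \ B → a < b → False := by
    intro a b ha hb h'
    obtain ⟨haA, haB⟩ := Finset.mem_sdiff.mp ha
    obtain ⟨hbA, hbB⟩ := Finset.mem_sdiff.mp hb
    rw [hA, Finset.mem_Iic] at haA hbA
    have hav : a.val ≤ k.val := haA
    have hbv : b.val ≤ k.val := hbA
    have hapos : k.val < (w.symm a).val := by
      by_contra hc; exact haB (by rw [hB, Finset.mem_filter]; exact ⟨by rwa [hA, Finset.mem_Iic], by omega⟩)
    have hbpos : k.val < (w.symm b).val := by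
      by_contra hc; exact hbB (by rw [hB, Finset.mem_filter]; exact ⟨by rwa [hA, Finset.mem_Iic], by omega⟩)
    -- positions s < t with values a < b (tail increasing)
    set s := w.symm a
    set t := w.symm b
    have hws : w s = a := w.apply_symm_apply a
    have hwt : w t = b := w.apply_symm_apply b
    have hst : s < t := by
      rcases lt_trichotomy s t with h | h | h
      · exact h
      · exfalso; exact Fin.ne_of_lt h' (w.symm.injective h)
      · exfalso
        have := tail_mono w hw k hk t s (by rwa [Fin.lt_def]) h
        rw [hws, hwt] at this
        exact absurd h' (not_lt.mpr (le_of_lt this))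
    -- 3412 occurrence: (q, k, s, t)
    refine hw.2 ((contains3412_iff w).mpr ⟨w.symm v, k, s, t, hqk', by rwa [Fin.lt_def], hst, ?_, ?_, ?_⟩)
    · rw [hws, hwt]; exact h'
    · rw [hwt, hwq]; rw [Fin.lt_def]; omega
    · rw [Fin.lt_def, hwq, hk]; omega
  rcases lt_or_gt_of_ne hab with h' | h'
  · exact key a b ha hb h'
  · exact key b a hb ha h'
include hw hk in
/-- positions of middle values: w⁻¹ v = v + 1 for v ∈ [k+1, n-2] -/
lemma mid_val_exact : ∀ v : Fin n, k.val + 1 ≤ v.val → v.val ≤ n - 2 →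
    (w.symm v).val = v.val + 1 := by
  suffices H : ∀ d : ℕ, ∀ v : Fin n, k.val + 1 ≤ v.val → v.val ≤ n - 2 →
      n - 2 - v.val ≤ d → (w.symm v).val = v.val + 1 by
    intro v h1 h2; exact H (n - 2 - v.val) v h1 h2 le_rfl
  intro d
  induction d with
  | zero =>
    intro v h1 h2 h3
    have hvn : v.val < n := v.isLt
    have hv : v.val = n - 2 := by omega
    have hq : k.val < (w.symm v).val := Fin.lt_def.mp (mid_val_pos w hw k hk v h1 h2)
    have hqn : (w.symm v).val < n := (w.symm v).isLt
    by_contra hne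
    have hlt : (w.symm v).val < n - 1 := by omega
    have hn2 : n - 1 < n := by omega
    have hmono := tail_mono w hw k hk (w.symm v) ⟨n - 1, hn2⟩
      (Fin.lt_def.mpr hq) (Fin.lt_def.mpr hlt)
    rw [w.apply_symm_apply] at hmono
    have h6 : v.val < (w ⟨n - 1, hn2⟩).val := Fin.lt_def.mp hmono
    have h5 : (w ⟨n - 1, hn2⟩).val < n := (w _).isLt
    have h8 : (⟨n - 1, hn2⟩ : Fin n) ≠ k := by
      intro he
      have h9 := congrArg Fin.val he
      simp only [] at h9
      have h10 : (⟨n - 1, hn2⟩ : Fin n).val = n - 1 := rfl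
      omega
    have h7 : (w ⟨n - 1, hn2⟩).val ≠ n - 1 := by
      intro he
      exact h8 (w.injective (Fin.ext (by rw [he, hk])))
    have hc : (⟨n - 1, hn2⟩ : Fin n).val = n - 1 := rfl
    omega
  | succ d ih =>
    intro v h1 h2 h3
    have hvn : v.val < n := v.isLt
    have hq : k.val < (w.symm v).val := Fin.lt_def.mp (mid_val_pos w hw k hk v h1 h2)
    have hqn : (w.symm v).val < n := (w.symm v).isLt
    by_contra hne
    rcases lt_or_gt_of_ne hne with hB | hA
    · -- Case B : (w.symm v).val ≤ v.val
      have htn : v.val + 1 < n := by omega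
      have hqt : w.symm v < (⟨v.val + 1, htn⟩ : Fin n) := Fin.lt_def.mpr (by simp; omega)
      have hmono := tail_mono w hw k hk (w.symm v) ⟨v.val + 1, htn⟩ (Fin.lt_def.mpr hq) hqt
      rw [w.apply_symm_apply] at hmono
      have h6 : v.val < (w ⟨v.val + 1, htn⟩).val := Fin.lt_def.mp hmono
      have h5 : (w ⟨v.val + 1, htn⟩).val < n := (w _).isLt
      have h8 : (⟨v.val + 1, htn⟩ : Fin n) ≠ k := by
        intro he
        have := congrArg Fin.val he
        simp at this
        omega
      have h7 : (w ⟨v.val + 1, htn⟩).val ≠ n - 1 := by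
        intro he
        exact h8 (w.injective (Fin.ext (by rw [he, hk])))
      have hc : (⟨v.val + 1, htn⟩ : Fin n).val = v.val + 1 := rfl
      have := ih (w ⟨v.val + 1, htn⟩) (by omega) (by omega) (by omega)
      rw [w.symm_apply_apply] at this
      rw [hc] at this
      omega
    · -- Case A : v.val + 1 < (w.symm v).val
      have hx : (w.symm v).val - 1 < n := by omega
      have := ih ⟨(w.symm v).val - 1, hx⟩ (by simp; omega) (by simp; omega) (by simp; omega)
      have hxq : w.symm (⟨(w.symm v).val - 1, hx⟩ : Fin n) = w.symm v :=
        Fin.ext (by rw [this]; simp; omega)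
      have := w.symm.injective hxq
      have := congrArg Fin.val this
      simp at this
      omega
include hw hk in
lemma tail_eq : ∀ i : Fin n, k.val + 2 ≤ i.val → (w i).val = i.val - 1 := by
  intro i hi
  have hin : i.val < n := i.isLt
  have hv : i.val - 1 < n := by omega
  have h0 := mid_val_exact w hw k hk ⟨i.val - 1, hv⟩ (by simp; omega) (by simp; omega)
  have h2 : w.symm ⟨i.val - 1, hv⟩ = i := Fin.ext (by rw [h0]; show i.val - 1 + 1 = i.val; omega)
  have h3 := congrArg w h2
  rw [w.apply_symm_apply] at h3
  rw [← h3]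

include hw hk in
lemma head_small : ∀ i : Fin n, i.val ≤ k.val + 1 → i.val ≠ k.val → (w i).val ≤ k.val := by
  intro i hi hik
  have hin : i.val < n := i.isLt
  have hwn : (w i).val < n := (w i).isLt
  have h1 : (w i).val ≠ n - 1 := by
    intro he
    exact hik (congrArg Fin.val (w.injective (Fin.ext (by rw [he, hk]))))
  by_contra hc
  push_neg at hc
  have h2 := mid_val_exact w hw k hk (w i) (by omega) (by omega)
  rw [w.symm_apply_apply] at h2
  omega
end Structure

section Phi
variable {n k : ℕ} (hk : k + 1 < n)

def phiFun (u : Perm (Fin (k+1))) : Fin n → Fin n := fun i =>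
  if h : i.val < k then ⟨(u ⟨i.val, by omega⟩).val, by have := (u ⟨i.val, by omega⟩).isLt; omega⟩
  else if i.val = k then ⟨n - 1, by omega⟩
  else if i.val = k + 1 then ⟨(u ⟨k, by omega⟩).val, by have := (u ⟨k, by omega⟩).isLt; omega⟩
  else ⟨i.val - 1, by have := i.isLt; omega⟩

variable (u : Perm (Fin (k+1)))

lemma phiFun_val_A (i : Fin n) (h : i.val < k) :
    (phiFun hk u i).val = (u ⟨i.val, by omega⟩).val := by
  unfold phiFun; rw [dif_pos h]

lemma phiFun_val_B (i : Fin n) (h : i.val = k) : (phiFun hk u i).val = n - 1 := by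
  unfold phiFun; rw [dif_neg (by omega), if_pos h]

lemma phiFun_val_C (i : Fin n) (h : i.val = k + 1) :
    (phiFun hk u i).val = (u ⟨k, by omega⟩).val := by
  unfold phiFun; rw [dif_neg (by omega), if_neg (by omega), if_pos h]

lemma phiFun_val_D (i : Fin n) (h : k + 1 < i.val) : (phiFun hk u i).val = i.val - 1 := by
  unfold phiFun; rw [dif_neg (by omega), if_neg (by omega), if_neg (by omega)]

lemma phiFun_inj : Function.Injective (phiFun hk u) := by
  intro i j he
  have hv := congrArg Fin.val he
  have hi := i.isLt
  have hj := j.isLt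
  have hui : ∀ m (hm : m < k + 1), (u ⟨m, hm⟩).val ≤ k := fun m hm =>
    Nat.lt_succ_iff.mp (u ⟨m, hm⟩).isLt
  apply Fin.ext
  rcases (by omega : i.val < k ∨ i.val = k ∨ i.val = k + 1 ∨ k + 1 < i.val) with h1 | h1 | h1 | h1 <;>
    rcases (by omega : j.val < k ∨ j.val = k ∨ j.val = k + 1 ∨ k + 1 < j.val) with h2 | h2 | h2 | h2
  · rw [phiFun_val_A hk u i h1, phiFun_val_A hk u j h2] at hv
    have h3 := u.injective (Fin.ext hv)
    rw [Fin.mk.injEq] at h3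
    omega
  · rw [phiFun_val_A hk u i h1, phiFun_val_B hk u j h2] at hv
    have := hui i.val (by omega); omega
  · rw [phiFun_val_A hk u i h1, phiFun_val_C hk u j h2] at hv
    have h3 := u.injective (Fin.ext hv)
    rw [Fin.mk.injEq] at h3
    omega
  · rw [phiFun_val_A hk u i h1, phiFun_val_D hk u j h2] at hv
    have := hui i.val (by omega); omega
  · rw [phiFun_val_B hk u i h1, phiFun_val_A hk u j h2] at hv
    have := hui j.val (by omega); omega
  · omega
  · rw [phiFun_val_B hk u i h1, phiFun_val_C hk u j h2] at hv
    have := hui k (by omega); omega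
  · rw [phiFun_val_B hk u i h1, phiFun_val_D hk u j h2] at hv
    omega
  · rw [phiFun_val_C hk u i h1, phiFun_val_A hk u j h2] at hv
    have h3 := u.injective (Fin.ext hv)
    rw [Fin.mk.injEq] at h3
    omega
  · rw [phiFun_val_C hk u i h1, phiFun_val_B hk u j h2] at hv
    have := hui k (by omega); omega
  · omega
  · rw [phiFun_val_C hk u i h1, phiFun_val_D hk u j h2] at hv
    have := hui k (by omega); omega
  · rw [phiFun_val_D hk u i h1, phiFun_val_A hk u j h2] at hv
    have := hui j.val (by omega); omega
  · rw [phiFun_val_D hk u i h1, phiFun_val_B hk u j h2] at hv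
    omega
  · rw [phiFun_val_D hk u i h1, phiFun_val_C hk u j h2] at hv
    have := hui k (by omega); omega
  · rw [phiFun_val_D hk u i h1, phiFun_val_D hk u j h2] at hv
    omega

noncomputable def phi : Perm (Fin n) :=
  Equiv.ofBijective _ (Finite.injective_iff_bijective.mp (phiFun_inj hk u))

lemma phi_apply (i : Fin n) : phi hk u i = phiFun hk u i := rfl
end Phi

lemma contains_transfer {n p m : ℕ} (w : Perm (Fin n)) (u : Perm (Fin p)) (g : Fin p → Fin n)
    (hg : StrictMono g) (hval : ∀ a b, u a < u b ↔ w (g a) < w (g b)) (v : Perm (Fin m)) :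
    Contains u v → Contains w v := fun ⟨f, hf, hv⟩ =>
  ⟨g ∘ f, hg.comp hf, fun a b => (hv a b).trans (hval _ _)⟩

section Phi2
variable {n k : ℕ} (hk : k + 1 < n) (u : Perm (Fin (k+1)))

lemma uval_le (m : Fin (k+1)) : (u m).val ≤ k := Nat.lt_succ_iff.mp (u m).isLt

/-- the embedding Fin (k+1) → Fin n hitting positions 0..k-1 and k+1 -/
def phiEmb : Fin (k+1) → Fin n := fun j =>
  if j.val < k then ⟨j.val, by omega⟩ else ⟨k + 1, hk⟩

lemma phiEmb_mono : StrictMono (phiEmb hk) := by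
  intro a b hab
  have ha := a.isLt
  have hb := b.isLt
  have h := Fin.lt_def.mp hab
  unfold phiEmb
  rw [Fin.lt_def]
  by_cases h1 : a.val < k <;> by_cases h2 : b.val < k <;>
    simp only [h1, h2, if_pos, if_neg, ite_true, ite_false] <;> omega

lemma phi_phiEmb_val (j : Fin (k+1)) : (phi hk u (phiEmb hk j)).val = (u j).val := by
  rw [phi_apply]
  have hj := j.isLt
  unfold phiEmb
  by_cases h1 : j.val < k
  · rw [if_pos h1, phiFun_val_A hk u _ h1]
  · rw [if_neg h1, phiFun_val_C hk u _ rfl]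
    have hjk : j = (⟨k, by omega⟩ : Fin (k+1)) := Fin.ext (by show j.val = k; omega)
    rw [hjk]

lemma booln_phi_mp : Booln (phi hk u) → Booln u := by
  intro hphi
  have htr : ∀ {m : ℕ} (v : Perm (Fin m)), Contains u v → Contains (phi hk u) v := by
    intro m v
    apply contains_transfer _ _ (phiEmb hk) (phiEmb_mono hk)
    intro a b
    rw [Fin.lt_def, Fin.lt_def, phi_phiEmb_val, phi_phiEmb_val]
  exact ⟨fun h => hphi.1 (htr _ h), fun h => hphi.2 (htr _ h)⟩

lemma phi_no321 : Contains (phi hk u) p321 → Contains u p321 := by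
  rw [contains321_iff, contains321_iff]
  rintro ⟨i, j, l, hij, hjl, hd1, hd2⟩
  rw [Fin.lt_def] at hij hjl hd1 hd2
  simp only [phi_apply] at hd1 hd2
  have hi := i.isLt
  have hj := j.isLt
  have hl := l.isLt
  -- Claim 1 : l.val ≤ k + 1
  have hl1 : l.val ≤ k + 1 := by
    by_contra hc
    push_neg at hc
    rw [phiFun_val_D hk u l hc] at hd1
    rcases (by omega : j.val < k ∨ j.val = k ∨ j.val = k + 1 ∨ k + 1 < j.val) with h2 | h2 | h2 | h2
    · rw [phiFun_val_A hk u j h2] at hd1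
      have := uval_le u ⟨j.val, by omega⟩; omega
    · rw [phiFun_val_B hk u j h2] at hd1 hd2
      have h3 : i.val < k := by omega
      rw [phiFun_val_A hk u i h3] at hd2
      have := uval_le u ⟨i.val, by omega⟩; omega
    · rw [phiFun_val_C hk u j h2] at hd1
      have := uval_le u ⟨k, by omega⟩; omega
    · rw [phiFun_val_D hk u j h2] at hd1; omega
  -- Claim 2 : j.val ≠ k
  have hj2 : j.val ≠ k := by
    intro h2
    rw [phiFun_val_B hk u j h2] at hd2
    have h3 : i.val < k := by omega
    rw [phiFun_val_A hk u i h3] at hd2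
    have := uval_le u ⟨i.val, by omega⟩; omega
  have hjk : j.val < k := by omega
  have hik : i.val < k := by omega
  rw [phiFun_val_A hk u j hjk] at hd1 hd2
  rw [phiFun_val_A hk u i hik] at hd2
  -- Claim 3 : l.val ≠ k
  have hl3 : l.val ≠ k := by
    intro h3
    rw [phiFun_val_B hk u l h3] at hd1
    have := uval_le u ⟨j.val, by omega⟩; omega
  rcases (by omega : l.val < k ∨ l.val = k + 1) with h4 | h4
  · rw [phiFun_val_A hk u l h4] at hd1
    exact ⟨⟨i.val, by omega⟩, ⟨j.val, by omega⟩, ⟨l.val, by omega⟩,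
      Fin.lt_def.mpr (by simp; omega), Fin.lt_def.mpr (by simp; omega),
      Fin.lt_def.mpr hd1, Fin.lt_def.mpr hd2⟩
  · rw [phiFun_val_C hk u l h4] at hd1
    exact ⟨⟨i.val, by omega⟩, ⟨j.val, by omega⟩, ⟨k, by omega⟩,
      Fin.lt_def.mpr (by simp; omega), Fin.lt_def.mpr (by simp; omega),
      Fin.lt_def.mpr hd1, Fin.lt_def.mpr hd2⟩

lemma phi_no3412 : Contains (phi hk u) p3412 → Contains u p3412 := by
  rw [contains3412_iff, contains3412_iff]
  rintro ⟨i, j, l, m, hij, hjl, hlm, hd1, hd2, hd3⟩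
  rw [Fin.lt_def] at hij hjl hlm hd1 hd2 hd3
  simp only [phi_apply] at hd1 hd2 hd3
  have hi := i.isLt
  have hj := j.isLt
  have hl := l.isLt
  have hm := m.isLt
  -- Claim 1 : m.val ≤ k + 1
  have hm1 : m.val ≤ k + 1 := by
    by_contra hc
    push_neg at hc
    rw [phiFun_val_D hk u m hc] at hd1 hd2
    -- w i > w m : examine j (w j > w i > w m)
    rcases (by omega : j.val < k ∨ j.val = k ∨ j.val = k + 1 ∨ k + 1 < j.val) with h2 | h2 | h2 | h2
    · rw [phiFun_val_A hk u j h2] at hd3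
      have := uval_le u ⟨j.val, by omega⟩; omega
    · -- j.val = k → i.val < k → w i ≤ k but w i > w m ≥ k+1... w m = m-1 ≥ k+1
      have h3 : i.val < k := by omega
      rw [phiFun_val_A hk u i h3] at hd2
      have := uval_le u ⟨i.val, by omega⟩; omega
    · rw [phiFun_val_C hk u j h2] at hd3
      have := uval_le u ⟨k, by omega⟩; omega
    · rw [phiFun_val_D hk u j h2] at hd3
      -- w j = j-1, w i < w j so w i < j-1; but w i > w m = m-1 > j-1. contra
      omega
  have hl1 : l.val ≤ k := by omega
  have hj2 : j.val < k := by omega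
  have hi2 : i.val < k := by omega
  -- l.val ≠ k
  have hl3 : l.val ≠ k := by
    intro h3
    rw [phiFun_val_B hk u l h3] at hd1
    have h4 : m.val = k + 1 := by omega
    rw [phiFun_val_C hk u m h4] at hd1
    have := uval_le u ⟨k, by omega⟩; omega
  have hl4 : l.val < k := by omega
  rw [phiFun_val_A hk u l hl4] at hd1
  rw [phiFun_val_A hk u i hi2] at hd2 hd3
  rw [phiFun_val_A hk u j hj2] at hd3
  have hm3 : m.val ≠ k := by
    intro h4
    rw [phiFun_val_B hk u m h4] at hd2
    have := uval_le u ⟨i.val, by omega⟩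
    omega
  rcases (by omega : m.val < k ∨ m.val = k + 1) with h4 | h4
  · rw [phiFun_val_A hk u m h4] at hd1 hd2
    exact ⟨⟨i.val, by omega⟩, ⟨j.val, by omega⟩, ⟨l.val, by omega⟩, ⟨m.val, by omega⟩,
      Fin.lt_def.mpr (by simp; omega), Fin.lt_def.mpr (by simp; omega),
      Fin.lt_def.mpr (by simp; omega),
      Fin.lt_def.mpr hd1, Fin.lt_def.mpr hd2, Fin.lt_def.mpr hd3⟩
  · rw [phiFun_val_C hk u m h4] at hd1 hd2
    exact ⟨⟨i.val, by omega⟩, ⟨j.val, by omega⟩, ⟨l.val, by omega⟩, ⟨k, by omega⟩,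
      Fin.lt_def.mpr (by simp; omega), Fin.lt_def.mpr (by simp; omega),
      Fin.lt_def.mpr (by simp; omega),
      Fin.lt_def.mpr hd1, Fin.lt_def.mpr hd2, Fin.lt_def.mpr hd3⟩

lemma booln_phi_mpr : Booln u → Booln (phi hk u) := fun hu =>
  ⟨fun h => hu.1 (phi_no321 hk u h), fun h => hu.2 (phi_no3412 hk u h)⟩
end Phi2

section Ext
variable {n : ℕ} (hn : 1 ≤ n) (u : Perm (Fin (n-1)))

def extFun : Fin n → Fin n := fun i =>
  if h : i.val < n - 1 then ⟨(u ⟨i.val, h⟩).val, by have := (u ⟨i.val, h⟩).isLt; omega⟩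
  else ⟨n - 1, by omega⟩

lemma extFun_val_lt (i : Fin n) (h : i.val < n - 1) :
    (extFun hn u i).val = (u ⟨i.val, h⟩).val := by unfold extFun; rw [dif_pos h]

lemma extFun_val_last (i : Fin n) (h : ¬ i.val < n - 1) :
    (extFun hn u i).val = n - 1 := by unfold extFun; rw [dif_neg h]

lemma extFun_inj : Function.Injective (extFun hn u) := by
  intro i j he
  have hv := congrArg Fin.val he
  have hi := i.isLt
  have hj := j.isLt
  apply Fin.ext
  by_cases h1 : i.val < n - 1 <;> by_cases h2 : j.val < n - 1
  · rw [extFun_val_lt hn u i h1, extFun_val_lt hn u j h2] at hv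
    have h3 := u.injective (Fin.ext hv)
    rw [Fin.mk.injEq] at h3
    exact h3
  · rw [extFun_val_lt hn u i h1, extFun_val_last hn u j h2] at hv
    have := (u ⟨i.val, h1⟩).isLt; omega
  · rw [extFun_val_last hn u i h1, extFun_val_lt hn u j h2] at hv
    have := (u ⟨j.val, h2⟩).isLt; omega
  · omega

noncomputable def extP : Perm (Fin n) :=
  Equiv.ofBijective _ (Finite.injective_iff_bijective.mp (extFun_inj hn u))

lemma extP_apply (i : Fin n) : extP hn u i = extFun hn u i := rfl

def extEmb : Fin (n - 1) → Fin n := fun j => ⟨j.val, by have := j.isLt; omega⟩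

lemma booln_extP_mp : Booln (extP hn u) → Booln u := by
  intro hext
  have htr : ∀ {m : ℕ} (v : Perm (Fin m)), Contains u v → Contains (extP hn u) v := by
    intro m v
    apply contains_transfer _ _ (extEmb hn)
      (fun a b hab => Fin.lt_def.mpr (Fin.lt_def.mp hab))
    intro a b
    unfold extEmb
    rw [Fin.lt_def, Fin.lt_def]
    have ha := a.isLt
    have hb := b.isLt
    rw [extP_apply, extP_apply, extFun_val_lt hn u _ (by show a.val < n - 1; omega),
      extFun_val_lt hn u _ (by show b.val < n - 1; omega)]
  exact ⟨fun h => hext.1 (htr _ h), fun h => hext.2 (htr _ h)⟩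

lemma extP_no321 : Contains (extP hn u) p321 → Contains u p321 := by
  rw [contains321_iff, contains321_iff]
  rintro ⟨i, j, l, hij, hjl, hd1, hd2⟩
  rw [Fin.lt_def] at hij hjl hd1 hd2
  simp only [extP_apply] at hd1 hd2
  have hi := i.isLt
  have hj := j.isLt
  have hl := l.isLt
  -- l ≠ last : if l = last then w l = n-1 max but w l < w j
  have hl1 : l.val < n - 1 := by
    by_contra hc
    rw [extFun_val_last hn u l hc] at hd1
    rcases (by omega : j.val < n - 1) with h2
    rw [extFun_val_lt hn u j h2] at hd1
    have := (u ⟨j.val, h2⟩).isLt; omega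
  have hj1 : j.val < n - 1 := by omega
  have hi1 : i.val < n - 1 := by omega
  rw [extFun_val_lt hn u l hl1, extFun_val_lt hn u j hj1] at hd1
  rw [extFun_val_lt hn u j hj1, extFun_val_lt hn u i hi1] at hd2
  exact ⟨⟨i.val, hi1⟩, ⟨j.val, hj1⟩, ⟨l.val, hl1⟩,
    Fin.lt_def.mpr (by simp; omega), Fin.lt_def.mpr (by simp; omega),
    Fin.lt_def.mpr hd1, Fin.lt_def.mpr hd2⟩

lemma extP_no3412 : Contains (extP hn u) p3412 → Contains u p3412 := by
  rw [contains3412_iff, contains3412_iff]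
  rintro ⟨i, j, l, m, hij, hjl, hlm, hd1, hd2, hd3⟩
  rw [Fin.lt_def] at hij hjl hlm hd1 hd2 hd3
  simp only [extP_apply] at hd1 hd2 hd3
  have hi := i.isLt
  have hj := j.isLt
  have hl := l.isLt
  have hm := m.isLt
  have hm1 : m.val < n - 1 := by
    by_contra hc
    rw [extFun_val_last hn u m hc] at hd2
    rcases (by omega : i.val < n - 1) with h2
    rw [extFun_val_lt hn u i h2] at hd2
    have := (u ⟨i.val, h2⟩).isLt; omega
  have hl1 : l.val < n - 1 := by omega
  have hj1 : j.val < n - 1 := by omega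
  have hi1 : i.val < n - 1 := by omega
  rw [extFun_val_lt hn u l hl1, extFun_val_lt hn u m hm1] at hd1
  rw [extFun_val_lt hn u m hm1, extFun_val_lt hn u i hi1] at hd2
  rw [extFun_val_lt hn u i hi1, extFun_val_lt hn u j hj1] at hd3
  exact ⟨⟨i.val, hi1⟩, ⟨j.val, hj1⟩, ⟨l.val, hl1⟩, ⟨m.val, hm1⟩,
    Fin.lt_def.mpr (by simp; omega), Fin.lt_def.mpr (by simp; omega),
    Fin.lt_def.mpr (by simp; omega),
    Fin.lt_def.mpr hd1, Fin.lt_def.mpr hd2, Fin.lt_def.mpr hd3⟩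

lemma booln_extP_mpr : Booln u → Booln (extP hn u) := fun hu =>
  ⟨fun h => hu.1 (extP_no321 hn u h), fun h => hu.2 (extP_no3412 hn u h)⟩
end Ext

set_option maxHeartbeats 1600000

section Master
variable {n : ℕ} (hn : 2 ≤ n)

include hn in
lemma hn1 : 1 ≤ n := by omega
include hn in
lemma hkp (k : Fin (n-1)) : k.val + 1 < n := by have := k.isLt; omega

noncomputable def Dmap :
    ({u : Perm (Fin (n-1)) // Booln u} ⊕ (Σ k : Fin (n-1), {u : Perm (Fin (k.val+1)) // Booln u}))
    → {w : Perm (Fin n) // Booln w} := fun x =>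
  match x with
  | Sum.inl u => ⟨extP (hn1 hn) u.1, booln_extP_mpr _ _ u.2⟩
  | Sum.inr ⟨k, u⟩ => ⟨phi (hkp hn k) u.1, booln_phi_mpr _ _ u.2⟩

-- position of the max value determines the case
omit hn in
lemma phi_max_pos {k : ℕ} (hk : k + 1 < n) (u : Perm (Fin (k+1))) (i : Fin n)
    (h : (phi hk u i).val = n - 1) : i.val = k := by
  have hi := i.isLt
  rw [phi_apply] at h
  have hu : ∀ m (hm : m < k + 1), (u ⟨m, hm⟩).val ≤ k := fun m hm =>
    Nat.lt_succ_iff.mp (u ⟨m, hm⟩).isLt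
  rcases (by omega : i.val < k ∨ i.val = k ∨ i.val = k + 1 ∨ k + 1 < i.val) with h1 | h1 | h1 | h1
  · rw [phiFun_val_A hk u i h1] at h
    have := hu i.val (by omega); omega
  · exact h1
  · rw [phiFun_val_C hk u i h1] at h
    have := hu k (by omega); omega
  · rw [phiFun_val_D hk u i h1] at h
    omega

lemma extP_max_pos (u : Perm (Fin (n-1))) (i : Fin n)
    (h : (extP (hn1 hn) u i).val = n - 1) : i.val = n - 1 := by
  have hi := i.isLt
  rw [extP_apply] at h
  by_contra hc
  have h1 : i.val < n - 1 := by omega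
  rw [extFun_val_lt _ u i h1] at h
  have := (u ⟨i.val, h1⟩).isLt
  omega

lemma Dmap_inj : Function.Injective (Dmap hn) := by
  rintro x y he
  have hpe : (Dmap hn x).1 = (Dmap hn y).1 := congrArg Subtype.val he
  match x, y with
  | Sum.inl u, Sum.inl u' =>
    simp only [Dmap] at hpe
    congr 1
    apply Subtype.ext
    apply Equiv.ext
    intro i
    have hi := i.isLt
    have h1 := congrArg (fun (p : Perm (Fin n)) => (p ⟨i.val, by omega⟩).val) hpe
    simp only [extP_apply] at h1
    rw [extFun_val_lt _ u.1 _ (by show i.val < n - 1; omega),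
      extFun_val_lt _ u'.1 _ (by show i.val < n - 1; omega)] at h1
    apply Fin.ext
    have e1 : (⟨i.val, i.isLt⟩ : Fin (n-1)) = i := Fin.ext rfl
    rw [← e1]
    exact h1
  | Sum.inl u, Sum.inr ⟨k, u'⟩ =>
    exfalso
    simp only [Dmap] at hpe
    have hk := k.isLt
    have h1 : (extP (hn1 hn) u.1 ⟨n-1, by omega⟩).val = n - 1 := by
      rw [extP_apply]
      exact extFun_val_last _ u.1 _ (by show ¬ n - 1 < n - 1; omega)
    rw [hpe] at h1
    have := phi_max_pos (hkp hn k) u'.1 _ h1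
    simp only [] at this
    omega
  | Sum.inr ⟨k, u'⟩, Sum.inl u =>
    exfalso
    simp only [Dmap] at hpe
    have hk := k.isLt
    have h1 : (phi (hkp hn k) u'.1 ⟨k.val, by omega⟩).val = n - 1 := by
      rw [phi_apply]
      exact phiFun_val_B _ u'.1 _ rfl
    rw [hpe] at h1
    have := extP_max_pos hn u.1 _ h1
    simp only [] at this
    omega
  | Sum.inr ⟨k, u⟩, Sum.inr ⟨k', u'⟩ =>
    simp only [Dmap] at hpe
    have hk := k.isLt
    have hk' := k'.isLt
    have hkk : k = k' := by
      have h1 : (phi (hkp hn k) u.1 ⟨k.val, by omega⟩).val = n - 1 := by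
        rw [phi_apply]
        exact phiFun_val_B _ u.1 _ rfl
      rw [hpe] at h1
      have := phi_max_pos (hkp hn k') u'.1 _ h1
      exact Fin.ext this
    subst hkk
    have hus : u = u' := by
      apply Subtype.ext
      apply Equiv.ext
      intro i
      have hi := i.isLt
      apply Fin.ext
      rcases (by omega : i.val < k.val ∨ i.val = k.val) with h1 | h1
      · have h2 := congrArg (fun (p : Perm (Fin n)) => (p ⟨i.val, by omega⟩).val) hpe
        simp only [phi_apply] at h2
        have hA := phiFun_val_A (hkp hn k) u.1 ⟨i.val, by omega⟩ h1
        have hA' := phiFun_val_A (hkp hn k) u'.1 ⟨i.val, by omega⟩ h1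
        have h4 := (hA.symm.trans h2).trans hA'
        have e1 : (⟨i.val, by omega⟩ : Fin (k.val+1)) = i := Fin.ext rfl
        rw [← e1]
        exact h4
      · have h2 := congrArg (fun (p : Perm (Fin n)) => (p ⟨k.val + 1, by omega⟩).val) hpe
        simp only [phi_apply] at h2
        have hA := phiFun_val_C (hkp hn k) u.1 ⟨k.val + 1, by omega⟩ rfl
        have hA' := phiFun_val_C (hkp hn k) u'.1 ⟨k.val + 1, by omega⟩ rfl
        have h4 := (hA.symm.trans h2).trans hA'
        have e1 : (⟨k.val, by omega⟩ : Fin (k.val+1)) = i := Fin.ext (by show k.val = i.val; omega)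
        rw [← e1]
        exact h4
    rw [hus]

set_option maxHeartbeats 1000000 in
lemma Dmap_surj : Function.Surjective (Dmap hn) := by
  rintro ⟨w, hw⟩
  set K : Fin n := w.symm ⟨n-1, by omega⟩ with hKd
  have hK : (w K).val = n - 1 := by rw [hKd, w.apply_symm_apply]
  have hKn := K.isLt
  by_cases hc : K.val = n - 1
  · -- last position: extension case
    have hresb : ∀ i : Fin (n-1), (w ⟨i.val, by have := i.isLt; omega⟩).val < n - 1 := by
      intro i
      have hi := i.isLt
      have hne : (⟨i.val, by omega⟩ : Fin n) ≠ K := by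
        intro he; have := congrArg Fin.val he; simp only [] at this; omega
      have h2 : (w ⟨i.val, by omega⟩).val ≠ n - 1 := by
        intro he
        exact hne (w.injective (Fin.ext (by rw [he, hK])))
      have := (w ⟨i.val, by omega⟩).isLt
      omega
    set resFun : Fin (n-1) → Fin (n-1) :=
      fun i => ⟨(w ⟨i.val, by have := i.isLt; omega⟩).val, hresb i⟩ with hres
    have hresinj : Function.Injective resFun := by
      intro i j he
      have hv := congrArg Fin.val he
      simp only [hres] at hv
      have h3 := w.injective (Fin.ext hv)
      rw [Fin.mk.injEq] at h3
      exact Fin.ext h3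
    set resP : Perm (Fin (n-1)) :=
      Equiv.ofBijective _ (Finite.injective_iff_bijective.mp hresinj) with hresP
    have hresPa : ∀ i, resP i = resFun i := fun i => rfl
    have hclaim : extP (hn1 hn) resP = w := by
      apply Equiv.ext
      intro i
      apply Fin.ext
      have hi := i.isLt
      rw [extP_apply]
      by_cases h1 : i.val < n - 1
      · rw [extFun_val_lt _ resP i h1, hresPa]
      · rw [extFun_val_last _ resP i h1]
        have : i = K := Fin.ext (by omega)
        rw [this, hK]
    refine ⟨Sum.inl ⟨resP, booln_extP_mp _ resP (by rw [hclaim]; exact hw)⟩, ?_⟩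
    apply Subtype.ext
    exact hclaim
  · -- phi case
    have hkn : K.val + 1 < n := by omega
    have hub : ∀ i : Fin (K.val + 1),
        (w (if i.val = K.val then ⟨K.val+1, hkn⟩ else ⟨i.val, by have := i.isLt; omega⟩)).val
          ≤ K.val := by
      intro i
      have hi := i.isLt
      by_cases h1 : i.val = K.val
      · rw [if_pos h1]
        exact head_small w hw K hK _ (by show K.val + 1 ≤ K.val + 1; omega)
          (by show K.val + 1 ≠ K.val; omega)
      · rw [if_neg h1]
        exact head_small w hw K hK _ (by show i.val ≤ K.val + 1; omega)
          (by show i.val ≠ K.val; omega)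
    set uFun : Fin (K.val+1) → Fin (K.val+1) := fun i =>
      ⟨(w (if i.val = K.val then ⟨K.val+1, hkn⟩ else ⟨i.val, by have := i.isLt; omega⟩)).val,
        by have := hub i; omega⟩ with hu
    have huinj : Function.Injective uFun := by
      intro i j he
      have hi := i.isLt
      have hj := j.isLt
      have hv := congrArg Fin.val he
      simp only [hu] at hv
      have h3 := w.injective (Fin.ext hv)
      by_cases h1 : i.val = K.val <;> by_cases h2 : j.val = K.val
      · exact Fin.ext (by omega)
      · rw [if_pos h1, if_neg h2, Fin.mk.injEq] at h3
        exact absurd h3 (by omega)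
      · rw [if_neg h1, if_pos h2, Fin.mk.injEq] at h3
        exact absurd h3 (by omega)
      · rw [if_neg h1, if_neg h2, Fin.mk.injEq] at h3
        exact Fin.ext h3
    set uP : Perm (Fin (K.val+1)) :=
      Equiv.ofBijective _ (Finite.injective_iff_bijective.mp huinj) with huP
    have hupa : ∀ i, uP i = uFun i := fun _ => rfl
    have hclaim : phi hkn uP = w := by
      apply Equiv.ext
      intro i
      apply Fin.ext
      have hi := i.isLt
      rw [phi_apply]
      rcases (by omega : i.val < K.val ∨ i.val = K.val ∨ i.val = K.val + 1 ∨ K.val + 1 < i.val)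
        with h1 | h1 | h1 | h1
      · rw [phiFun_val_A hkn uP i h1, hupa]
        simp only [hu]
        split_ifs with hs
        · exact absurd hs (by omega)
        · rw [show (⟨i.val, by omega⟩ : Fin n) = i from Fin.ext rfl]
      · rw [phiFun_val_B hkn uP i h1]
        rw [show i = K from Fin.ext h1]
        exact hK.symm
      · rw [phiFun_val_C hkn uP i h1, hupa]
        simp only [hu]
        rw [show i = (⟨K.val + 1, hkn⟩ : Fin n) from Fin.ext h1]
        split_ifs with hs
        · rfl
        · exact absurd trivial hs
      · rw [phiFun_val_D hkn uP i h1]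
        exact (tail_eq w hw K hK i (by omega)).symm
    refine ⟨Sum.inr ⟨⟨K.val, by omega⟩, ⟨uP, booln_phi_mp hkn uP (by rw [hclaim]; exact hw)⟩⟩, ?_⟩
    apply Subtype.ext
    exact hclaim
end Master

lemma natCard_sigma {ι : Type*} [Fintype ι] (α : ι → Type*) [∀ i, Finite (α i)] :
    Nat.card (Σ i, α i) = ∑ i, Nat.card (α i) := by
  letI := fun i => Fintype.ofFinite (α i)
  simp only [Nat.card_eq_fintype_card, Fintype.card_sigma]

lemma card_rec {n : ℕ} (hn : 2 ≤ n) :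
    Nat.card {w : Perm (Fin n) // Booln w} =
      Nat.card {u : Perm (Fin (n-1)) // Booln u} +
      ∑ k : Fin (n-1), Nat.card {u : Perm (Fin (k.val+1)) // Booln u} := by
  have hb : Function.Bijective (Dmap hn) := ⟨Dmap_inj hn, Dmap_surj hn⟩
  rw [← Nat.card_congr (Equiv.ofBijective _ hb)]
  rw [Nat.card_sum, natCard_sigma]

lemma not_contains_small {n m : ℕ} (w : Perm (Fin n)) (v : Perm (Fin m)) (h : n < m) :
    ¬ Contains w v := by
  rintro ⟨f, hf, -⟩
  have := Fintype.card_le_of_injective f hf.injective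
  simp only [Fintype.card_fin] at this
  omega

lemma card_one : Nat.card {w : Perm (Fin 1) // Booln w} = 1 := by
  have hall : ∀ w : Perm (Fin 1), Booln w := fun w =>
    ⟨not_contains_small w p321 (by omega), not_contains_small w p3412 (by omega)⟩
  rw [Nat.card_congr (Equiv.subtypeUnivEquiv hall)]
  simp [Nat.card_eq_fintype_card]

lemma fib_sum (m : ℕ) : ∑ k ∈ Finset.range m, Nat.fib (2*k+1) = Nat.fib (2*m) := by
  induction m with
  | zero => simp
  | succ m ih =>
    rw [Finset.sum_range_succ, ih, show 2*(m+1) = 2*m+2 from by omega, Nat.fib_add_two]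

lemma card_booln : ∀ n : ℕ, 1 ≤ n →
    Nat.card {w : Perm (Fin n) // Booln w} = Nat.fib (2*n-1) := by
  intro n
  induction n using Nat.strong_induction_on with
  | _ n ih =>
    intro hn
    rcases eq_or_lt_of_le hn with h1 | h1
    · rw [← h1]
      exact card_one
    · have hn2 : 2 ≤ n := h1
      rw [card_rec hn2]
      have e1 : Nat.card {u : Perm (Fin (n-1)) // Booln u} = Nat.fib (2*(n-1)-1) :=
        ih (n-1) (by omega) (by omega)
      have e2 : ∑ k : Fin (n-1), Nat.card {u : Perm (Fin (k.val+1)) // Booln u} =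
          ∑ k : Fin (n-1), Nat.fib (2*(k.val+1)-1) :=
        Finset.sum_congr rfl (fun k _ => ih (k.val+1) (by have := k.isLt; omega) (by omega))
      rw [e1, e2]
      have e3 : ∑ k : Fin (n-1), Nat.fib (2*(k.val+1)-1) =
          ∑ k ∈ Finset.range (n-1), Nat.fib (2*k+1) := by
        rw [← Fin.sum_univ_eq_sum_range (fun k => Nat.fib (2*k+1)) (n-1)]
        exact Finset.sum_congr rfl (fun k _ => by rw [show 2*(k.val+1)-1 = 2*k.val+1 from by omega])
      rw [e3, fib_sum]
      rw [show 2*n-1 = (2*n-3)+2 from by omega, Nat.fib_add_two,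
        show 2*(n-1)-1 = 2*n-3 from by omega, show 2*(n-1) = 2*n-3+1 from by omega]

/-- The number of permutations in `S_n` avoiding both 321 and 3412 (the Boolean
permutations) is the Fibonacci number `F_{2n-1}`, where `F_1 = F_2 = 1`. -/
theorem card_boolean_eq_fib (n : ℕ) (hn : 1 ≤ n) :
    Nat.card {w : Equiv.Perm (Fin n) // ¬ Contains w p321 ∧ ¬ Contains w p3412} =
      Nat.fib (2 * n - 1) := card_booln n hn
end

section
/- A permutation w in S_4 indexes a singular Schubert variety (i.e., fails the condition that the number of transpositions t_{ij} with t_{ij} ≤ w in Bruhat order equals ℓ(w)) if and only if w = 3412 or w = 4231. Equivalently: for w in S_4, #{(i,j) : i < j, t_{ij} ≤ w} = ℓ(w) if and only if w ∉ {3412, 4231}. -/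
/-- The number of inversions of a permutation of `Fin n`. -/
def inversions {n : ℕ} (w : Equiv.Perm (Fin n)) : ℕ :=
  (Finset.univ.filter (fun p : Fin n × Fin n => p.1 < p.2 ∧ w p.2 < w p.1)).card

/-- The permutation 4231 in one-line notation. -/
def p4231 : Equiv.Perm (Fin 4) := ⟨![3, 1, 2, 0], ![3, 1, 2, 0], by decide, by decide⟩


lemma step_lt : ∀ u : Equiv.Perm (Fin 4), ∀ i j : Fin 4, i < j → u i < u j →
    inversions u < inversions (u * Equiv.swap i j) := by decide

lemma inv_le_six : ∀ w : Equiv.Perm (Fin 4), inversions w ≤ 6 := by decide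

/-- Downward search for Bruhat order with fuel. -/
def reach : ℕ → Equiv.Perm (Fin 4) → Equiv.Perm (Fin 4) → Bool
  | 0, v, w => decide (v = w)
  | n+1, v, w => decide (v = w) ||
      (List.finRange 4).any fun i => (List.finRange 4).any fun j =>
        decide (i < j) && decide (w j < w i) && reach n v (w * Equiv.swap i j)

lemma reach_sound : ∀ n (v w : Equiv.Perm (Fin 4)), reach n v w = true → BruhatLE v w := by
  intro n
  induction n with
  | zero => intro v w h; simp [reach] at h; exact h ▸ Relation.ReflTransGen.refl
  | succ n ih =>
    intro v w h
    simp only [reach, Bool.or_eq_true, decide_eq_true_eq, List.any_eq_true,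
      Bool.and_eq_true, List.mem_finRange] at h
    rcases h with h | ⟨i, _, j, _, ⟨hij, hji⟩, hr⟩
    · exact h ▸ Relation.ReflTransGen.refl
    · have hu := ih v (w * Equiv.swap i j) hr
      have hstep : BruhatStep (w * Equiv.swap i j) w := by
        refine ⟨i, j, hij, ?_, ?_⟩
        · simpa using hji
        · simp [mul_assoc]
      exact hu.tail hstep

lemma bruhat_mono {v u : Equiv.Perm (Fin 4)} (h : BruhatLE v u) : inversions v ≤ inversions u := by
  induction h with
  | refl => exact le_refl _
  | tail _ hstep ih =>
    obtain ⟨i, j, hij, hlt, rfl⟩ := hstep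
    exact le_of_lt (lt_of_le_of_lt ih (step_lt _ i j hij hlt))

lemma reach_complete {v w : Equiv.Perm (Fin 4)} (h : BruhatLE v w) :
    ∀ n, inversions w ≤ inversions v + n → reach n v w = true := by
  induction h with
  | refl => intro n _; cases n <;> simp [reach]
  | @tail u w huv hstep ih =>
    intro n hn
    obtain ⟨i, j, hij, hlt, rfl⟩ := hstep
    have h1 : inversions u < inversions (u * Equiv.swap i j) := step_lt u i j hij hlt
    have h2 : inversions v ≤ inversions u := bruhat_mono huv
    obtain ⟨m, rfl⟩ : ∃ m, n = m + 1 := by cases n with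
      | zero => omega
      | succ m => exact ⟨m, rfl⟩
    have hr : reach m v u = true := ih m (by omega)
    simp only [reach, Bool.or_eq_true, decide_eq_true_eq, List.any_eq_true,
      Bool.and_eq_true, List.mem_finRange]
    right
    refine ⟨i, trivial, j, trivial, ⟨hij, ?_⟩, ?_⟩
    · simpa using hlt
    · have : u * Equiv.swap i j * Equiv.swap i j = u := by simp [mul_assoc]
      rw [this]; exact hr

lemma bruhat_iff_reach (v w : Equiv.Perm (Fin 4)) : BruhatLE v w ↔ reach 6 v w = true := by
  constructor
  · intro h; exact reach_complete h 6 (by have := inv_le_six w; omega)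
  · exact reach_sound 6 v w

lemma main_dec : ∀ w : Equiv.Perm (Fin 4),
    ((Finset.univ.filter fun p : Fin 4 × Fin 4 =>
        p.1 < p.2 ∧ reach 6 (Equiv.swap p.1 p.2) w = true).card = inversions w ↔
      (w ≠ p3412 ∧ w ≠ p4231)) := by decide

/-- For `w ∈ S_4`, the number of transpositions `t_{ij} ≤ w` in Bruhat order equals `ℓ(w)`
if and only if `w` is neither 3412 nor 4231; i.e. `X_w` is singular iff `w ∈ {3412, 4231}`. -/
theorem smooth_iff_ne_3412_and_ne_4231 (w : Equiv.Perm (Fin 4)) :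
    Nat.card {p : Fin 4 × Fin 4 //
        p.1 < p.2 ∧ BruhatLE (Equiv.swap p.1 p.2) w} = inversions w ↔
      (w ≠ p3412 ∧ w ≠ p4231) := by
  have e : {p : Fin 4 × Fin 4 // p.1 < p.2 ∧ BruhatLE (Equiv.swap p.1 p.2) w} ≃
      {p : Fin 4 × Fin 4 // p.1 < p.2 ∧ reach 6 (Equiv.swap p.1 p.2) w = true} :=
    Equiv.subtypeEquivRight (fun p => by rw [bruhat_iff_reach])
  rw [Nat.card_congr e, Nat.card_eq_fintype_card, Fintype.card_subtype]
  exact main_dec w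
end

section
/- In a Coxeter group W, x ≤ y in Bruhat order if and only if for any (equivalently, some) reduced expression y = s_{i_1}···s_{i_p}, there exists a subword s_{i_{j_1}}···s_{i_{j_k}} (with j_1 < ... < j_k) that is a reduced expression for x. -/
variable {B W : Type*} [Group W] {M : CoxeterMatrix B}

/-- One step of the Bruhat order on a Coxeter group: `y = x·t` for a reflection `t`
with `ℓ(x) < ℓ(y)`. -/
def CoxBruhatStep (cs : CoxeterSystem M W) (x y : W) : Prop :=
  ∃ t : W, cs.IsReflection t ∧ y = x * t ∧ cs.length x < cs.length y

/-- Bruhat order on a Coxeter group: reflexive-transitive closure of `CoxBruhatStep`. -/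
def CoxBruhatLE (cs : CoxeterSystem M W) : W → W → Prop :=
  Relation.ReflTransGen (CoxBruhatStep cs)

set_option linter.unusedSectionVars false

namespace CoxSubwordAux

open List CoxeterSystem

variable (cs : CoxeterSystem M W)

local prefix:100 "σ" => cs.simple
local prefix:100 "π" => cs.wordProd
local prefix:100 "ℓ" => cs.length
local prefix:100 "ris" => cs.rightInvSeq
local prefix:100 "lis" => cs.leftInvSeq

open Classical in
noncomputable def ind (t x : W) : ZMod 2 := if x = t then 1 else 0

lemma ind_congr {t x t' x' : W} (h : (x = t) ↔ (x' = t')) : ind t x = ind t' x' := by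
  classical
  unfold ind
  split_ifs with h1 h2 <;> tauto

lemma ind_comm (t x : W) : ind t x = ind x t := ind_congr eq_comm

lemma ind_conj (a t x : W) : ind t (a⁻¹ * x * a) = ind (a * t * a⁻¹) x := by
  apply ind_congr
  constructor
  · intro h; rw [← h]; group
  · intro h; rw [h]; group

lemma ind_add_self (t x : W) : ind t x + ind t x = 0 := by
  classical
  unfold ind
  split_ifs <;> decide

noncomputable def nu (ω : List B) (t : W) : ZMod 2 := ((ris ω).map (ind t)).sum

lemma ris_cons (i : B) (ω : List B) : ris (i :: ω) = ((π ω)⁻¹ * σ i * π ω) :: ris ω := rfl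

lemma lis_cons (i : B) (ω : List B) :
    lis (i :: ω) = σ i :: (lis ω).map (fun x => σ i * x * (σ i)⁻¹) := rfl

lemma nu_nil (t : W) : nu cs [] t = 0 := rfl

lemma nu_cons (i : B) (ω : List B) (t : W) :
    nu cs (i :: ω) t = ind t ((π ω)⁻¹ * σ i * π ω) + nu cs ω t := by
  simp [nu, ris_cons]

lemma ris_append (ω₁ ω₂ : List B) :
    ris (ω₁ ++ ω₂) = (ris ω₁).map (fun x => (π ω₂)⁻¹ * x * π ω₂) ++ ris ω₂ := by
  induction ω₁ with
  | nil => simp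
  | cons i ω₁ ih =>
      rw [cons_append, ris_cons, ris_cons, ih, map_cons, cons_append]
      congr 1
      rw [wordProd_append, mul_inv_rev]
      group

lemma nu_append (ω₁ ω₂ : List B) (t : W) :
    nu cs (ω₁ ++ ω₂) t = nu cs ω₁ (π ω₂ * t * (π ω₂)⁻¹) + nu cs ω₂ t := by
  simp only [nu, ris_append, map_append, sum_append, map_map]
  congr 1
  apply congrArg
  apply List.map_congr_left
  intro x _
  exact (ind_conj (π ω₂) t x).trans rfl

lemma lis_eq_map (ω : List B) : lis ω = (ris ω).map (fun x => π ω * x * (π ω)⁻¹) := by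
  induction ω with
  | nil => simp
  | cons i ω ih =>
      rw [lis_cons, ris_cons, ih, map_cons, map_map]
      congr 1
      · rw [wordProd_cons, mul_inv_rev, inv_simple]
        group
        rw [cs.simple_mul_simple_self i, one_mul]
      · apply List.map_congr_left
        intro x _
        simp only [Function.comp_apply, wordProd_cons, mul_inv_rev, inv_simple]
        group

lemma nu_reverse (ω : List B) (t : W) :
    nu cs ω.reverse t = nu cs ω ((π ω)⁻¹ * t * π ω) := by
  rw [nu, rightInvSeq_reverse, map_reverse, sum_reverse, lis_eq_map, map_map, nu]
  apply congrArg
  apply List.map_congr_left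
  intro x _
  simp only [Function.comp_apply]
  rw [show π ω * x * (π ω)⁻¹ = ((π ω)⁻¹)⁻¹ * x * (π ω)⁻¹ by group,
    ind_conj ((π ω)⁻¹) t x]
  simp

lemma conj_conj (a b x : W) : a * (b * x * b⁻¹) * a⁻¹ = (a * b) * x * (a * b)⁻¹ := by group

/-- The permutation of `W × ZMod 2` associated to a simple reflection. -/
noncomputable def phi (i : B) : Equiv.Perm (W × ZMod 2) :=
  Function.Involutive.toPerm
    (fun q => (σ i * q.1 * (σ i)⁻¹, q.2 + ind (σ i) q.1))
    (by
      rintro ⟨x, ε⟩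
      simp only [Prod.mk.injEq]
      constructor
      · rw [conj_conj, cs.simple_mul_simple_self i]; group
      · have : ind (σ i) (σ i * x * (σ i)⁻¹) = ind (σ i) x := by
          rw [show σ i * x * (σ i)⁻¹ = ((σ i)⁻¹)⁻¹ * x * (σ i)⁻¹ by group, ind_conj]
          congr 1
          simp
        rw [this, add_assoc, ind_add_self, add_zero])

lemma phi_apply (i : B) (x : W) (ε : ZMod 2) :
    phi cs i (x, ε) = (σ i * x * (σ i)⁻¹, ε + ind (σ i) x) := rfl

lemma simple_mul_pow_aux (i j : B) (r : ℕ) :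
    (σ j) * (σ i * σ j) ^ r = ((σ i * σ j) ^ r)⁻¹ * σ j := by
  have h1 : σ j * (σ i * σ j) = (σ i * σ j)⁻¹ * σ j := by
    rw [mul_inv_rev, inv_simple, inv_simple, mul_assoc]
  induction r with
  | zero => simp
  | succ r ih =>
      rw [pow_succ, ← mul_assoc, ih, mul_assoc, h1, ← mul_assoc, ← mul_inv_rev, ← pow_succ',
        pow_succ]

lemma pow_shift_aux (i j : B) (r : ℕ) :
    (σ i * σ j)⁻¹ * (((σ i * σ j) ^ r)⁻¹ * σ j) * ((σ i * σ j)⁻¹)⁻¹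
      = ((σ i * σ j) ^ (r + 1 + 1))⁻¹ * σ j := by
  have h1 : σ j * (σ i * σ j) = (σ i * σ j)⁻¹ * σ j := by
    rw [mul_inv_rev, inv_simple, inv_simple, mul_assoc]
  have hc : ((σ i * σ j) ^ r)⁻¹ * (σ i * σ j)⁻¹ = (σ i * σ j)⁻¹ * ((σ i * σ j) ^ r)⁻¹ :=
    (((Commute.refl (σ i * σ j)).pow_left r).inv_inv).eq
  have e1 : ((σ i * σ j) ^ (r + 1 + 1))⁻¹
      = (σ i * σ j)⁻¹ * ((σ i * σ j)⁻¹ * ((σ i * σ j) ^ r)⁻¹) := by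
    rw [pow_succ, pow_succ, mul_inv_rev ((σ i * σ j) ^ r * (σ i * σ j)) (σ i * σ j),
      mul_inv_rev ((σ i * σ j) ^ r) (σ i * σ j)]
  rw [inv_inv, e1]
  simp only [mul_assoc]
  congr 1
  rw [h1, ← mul_assoc, hc, mul_assoc]

lemma phi_mul_pow (i j : B) (k : ℕ) (x : W) (ε : ZMod 2) :
    ((phi cs i * phi cs j) ^ k) (x, ε) =
      ((σ i * σ j) ^ k * x * (((σ i * σ j) ^ k))⁻¹,
        ε + ∑ r ∈ Finset.range (2 * k), ind (((σ i * σ j) ^ r)⁻¹ * σ j) x) := by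
  induction k generalizing x ε with
  | zero => simp
  | succ k ih =>
      have hmul : ((phi cs i * phi cs j) ^ (k+1)) (x, ε)
          = ((phi cs i * phi cs j) ^ k) ((phi cs i * phi cs j) (x, ε)) := by
        rw [pow_succ]; rfl
      have h1 : (phi cs i * phi cs j) (x, ε) =
          ((σ i * σ j) * x * (σ i * σ j)⁻¹,
            ε + ind (((σ i * σ j) ^ 0)⁻¹ * σ j) x + ind (((σ i * σ j) ^ 1)⁻¹ * σ j) x) := by
        show phi cs i (phi cs j (x, ε)) = _
        rw [phi_apply, phi_apply]
        have e0 : ind (σ j) x = ind (((σ i * σ j) ^ 0)⁻¹ * σ j) x :=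
          ind_congr (by rw [pow_zero, inv_one, one_mul])
        have e1 : ind (σ i) (σ j * x * (σ j)⁻¹) = ind (((σ i * σ j) ^ 1)⁻¹ * σ j) x := by
          rw [show σ j * x * (σ j)⁻¹ = ((σ j)⁻¹)⁻¹ * x * (σ j)⁻¹ by group, ind_conj]
          congr 1
          simp only [pow_one, mul_inv_rev, inv_simple, inv_inv, mul_assoc]
        simp only [Prod.mk.injEq]
        exact ⟨by rw [conj_conj], by rw [e0, e1]⟩
      rw [hmul, h1, ih]
      simp only [Prod.mk.injEq]
      constructor
      · rw [conj_conj, ← pow_succ]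
      · have hshift : ∀ r : ℕ,
            ind (((σ i * σ j) ^ r)⁻¹ * σ j) ((σ i * σ j) * x * (σ i * σ j)⁻¹)
              = ind (((σ i * σ j) ^ (r + 1 + 1))⁻¹ * σ j) x := by
          intro r
          rw [show (σ i * σ j) * x * (σ i * σ j)⁻¹
              = ((σ i * σ j)⁻¹)⁻¹ * x * (σ i * σ j)⁻¹ by group, ind_conj]
          apply ind_congr
          rw [pow_shift_aux]
        rw [Finset.sum_congr rfl (fun r _ => hshift r),
          show 2 * (k + 1) = (2 * k + 1) + 1 by ring,
          Finset.sum_range_succ', Finset.sum_range_succ']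
        ring

lemma zmod2_add_self (a : ZMod 2) : a + a = 0 := by revert a; decide

lemma isLiftable : M.IsLiftable (phi cs) := by
  intro i j
  apply Equiv.ext
  rintro ⟨x, ε⟩
  rw [phi_mul_pow]
  have hp : (σ i * σ j) ^ M.M i j = 1 := cs.simple_mul_simple_pow i j
  have hsum : ∑ r ∈ Finset.range (2 * M.M i j), ind (((σ i * σ j) ^ r)⁻¹ * σ j) x = 0 := by
    rw [two_mul, Finset.sum_range_add]
    have : ∀ r : ℕ, ind (((σ i * σ j) ^ (M.M i j + r))⁻¹ * σ j) x
        = ind (((σ i * σ j) ^ r)⁻¹ * σ j) x := by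
      intro r
      rw [pow_add, hp, one_mul]
    rw [Finset.sum_congr rfl (fun r _ => this r)]
    exact zmod2_add_self _
  rw [hp, hsum, add_zero]
  simp

/-- The parity representation of the Coxeter group. -/
noncomputable def theta : W →* Equiv.Perm (W × ZMod 2) :=
  cs.lift ⟨phi cs, isLiftable cs⟩

lemma theta_simple (i : B) : theta cs (σ i) = phi cs i :=
  cs.lift_apply_simple (isLiftable cs) i

lemma theta_wordProd (ω : List B) (x : W) (ε : ZMod 2) :
    theta cs (π ω) (x, ε) = (π ω * x * (π ω)⁻¹, ε + nu cs ω x) := by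
  induction ω generalizing ε with
  | nil => simp [nu_nil]
  | cons i ω ih =>
      rw [wordProd_cons, map_mul, Equiv.Perm.mul_apply, ih, theta_simple, phi_apply,
        nu_cons]
      simp only [Prod.mk.injEq]
      constructor
      · rw [conj_conj, ← wordProd_cons]
      · rw [show π ω * x * (π ω)⁻¹ = ((π ω)⁻¹)⁻¹ * x * (π ω)⁻¹ by group, ind_conj,
          inv_inv, ind_comm]
        ring

lemma nu_eq_of_wordProd_eq {ω₁ ω₂ : List B} (h : π ω₁ = π ω₂) (t : W) :
    nu cs ω₁ t = nu cs ω₂ t := by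
  have h1 := theta_wordProd cs ω₁ t 0
  have h2 := theta_wordProd cs ω₂ t 0
  rw [h] at h1
  rw [h1] at h2
  have := congrArg Prod.snd h2
  simpa using this

lemma ind_self (t : W) : ind t t = 1 := by
  classical
  unfold ind
  rw [if_pos rfl]

lemma nu_eq_zero_of_not_mem {ω : List B} {t : W} (h : t ∉ ris ω) : nu cs ω t = 0 := by
  apply List.sum_eq_zero
  intro x hx
  obtain ⟨y, hy, rfl⟩ := List.mem_map.mp hx
  classical
  unfold ind
  rw [if_neg]
  rintro rfl
  exact h hy

lemma mem_of_nu_ne_zero {ω : List B} {t : W} (h : nu cs ω t ≠ 0) : t ∈ ris ω := by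
  by_contra hc
  exact h (nu_eq_zero_of_not_mem cs hc)

lemma nu_palindrome (υ : List B) (i : B) :
    nu cs (υ ++ i :: υ.reverse) (π υ * σ i * (π υ)⁻¹) = 1 := by
  have hπ : π (i :: υ.reverse) = σ i * (π υ)⁻¹ := by
    rw [wordProd_cons, wordProd_reverse]
  rw [nu_append, hπ]
  have h1 : σ i * (π υ)⁻¹ * (π υ * σ i * (π υ)⁻¹) * (σ i * (π υ)⁻¹)⁻¹ = σ i := by group
  rw [h1, nu_cons, wordProd_reverse, inv_inv, ind_self, nu_reverse]
  have h2 : (π υ)⁻¹ * (π υ * σ i * (π υ)⁻¹) * π υ = σ i := by group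
  rw [h2]
  rw [show ∀ a : ZMod 2, a + (1 + a) = 1 from by decide]

lemma strong_exchange_mem {ω : List B} (hω : cs.IsReduced ω) {t : W}
    (ht : cs.IsReflection t) (hl : ℓ (π ω * t) < ℓ (π ω)) : t ∈ ris ω := by
  have htt : t * t = 1 := ht.mul_self
  obtain ⟨u, i, htui⟩ := ht
  obtain ⟨υ, hυ⟩ := cs.wordProd_surjective u
  obtain ⟨ω₁, hω₁red, hω₁⟩ := cs.exists_reduced_word' (π ω * t)
  have hmem1 : t ∉ ris ω₁ := by
    intro hmem
    have h2 := (cs.isRightInversion_of_mem_rightInvSeq hω₁red hmem).2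
    rw [← hω₁, mul_assoc, htt, mul_one] at h2
    exact absurd hl (lt_asymm h2)
  have h0 : nu cs ω₁ t = 0 := nu_eq_zero_of_not_mem cs hmem1
  have hτ : π (υ ++ i :: υ.reverse) = t := by
    rw [wordProd_append, wordProd_cons, wordProd_reverse, hυ, htui, mul_assoc]
  have hprod : π (ω₁ ++ (υ ++ i :: υ.reverse)) = π ω := by
    rw [wordProd_append, hτ, ← hω₁, mul_assoc, htt, mul_one]
  have hnu : nu cs ω t = 1 := by
    rw [nu_eq_of_wordProd_eq cs hprod.symm t, nu_append, hτ,
      show t * t * t⁻¹ = t by group, h0]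
    have := nu_palindrome cs υ i
    rw [hυ, ← htui] at this
    rw [this, zero_add]
  apply mem_of_nu_ne_zero cs
  rw [hnu]
  decide

lemma strong_exchange {ω : List B} (hω : cs.IsReduced ω) {t : W}
    (ht : cs.IsReflection t) (hl : ℓ (π ω * t) < ℓ (π ω)) :
    ∃ j < ω.length, π (ω.eraseIdx j) = π ω * t := by
  obtain ⟨j, hj, hget⟩ := List.mem_iff_getElem.mp (strong_exchange_mem cs hω ht hl)
  refine ⟨j, by simpa using hj, ?_⟩
  have hgd : (ris ω).getD j 1 = t := by
    rw [List.getD_eq_getElem _ _ hj]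
    exact hget
  rw [← hgd]
  exact (cs.wordProd_mul_getD_rightInvSeq ω j).symm

lemma deletion_aux : ∀ n : ℕ, ∀ ω : List B, ω.length ≤ n →
    ∃ ω' : List B, ω'.Sublist ω ∧ cs.IsReduced ω' ∧ π ω' = π ω := by
  intro n
  induction n with
  | zero =>
      intro ω hlen
      rw [Nat.le_zero, List.length_eq_zero_iff] at hlen
      subst hlen
      exact ⟨[], List.Sublist.refl _, by simp [CoxeterSystem.IsReduced], rfl⟩
  | succ n ihn =>
      intro ω hlen
      by_cases hred : cs.IsReduced ω
      · exact ⟨ω, List.Sublist.refl _, hred, rfl⟩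
      · classical
        have hex : ∃ m : ℕ, ¬ cs.IsReduced (ω.take m) :=
          ⟨ω.length, by rwa [List.take_length]⟩
        have hk0 := Nat.find_spec hex
        have hk0pos : Nat.find hex ≠ 0 := by
          intro h
          rw [h, List.take_zero] at hk0
          exact hk0 (by simp [CoxeterSystem.IsReduced])
        set k := Nat.find hex - 1 with hkdef
        have hfind : Nat.find hex = k + 1 := by omega
        rw [hfind] at hk0
        have hkred : cs.IsReduced (ω.take k) := by
          have := Nat.find_min hex (show k < Nat.find hex by omega)
          rwa [not_not] at this
        have hk1le : k + 1 ≤ ω.length := by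
          have h2 : Nat.find hex ≤ ω.length := Nat.find_le (by rwa [List.take_length])
          omega
        have hklt : k < ω.length := by omega
        have htake : ω.take (k + 1) = ω.take k ++ [ω[k]] := by
          rw [List.take_succ, List.getElem?_eq_getElem hklt]
          rfl
        have hlenk : (ω.take k).length = k := by
          rw [List.length_take]
          omega
        have hlred : ℓ (π (ω.take k)) = k := by
          rw [hkred, hlenk]
        have hlt : ℓ (π (ω.take k) * σ (ω[k])) < ℓ (π (ω.take k)) := by
          have hne1 : ℓ (π (ω.take k) * σ (ω[k])) ≠ k + 1 := by
            intro h
            apply hk0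
            unfold CoxeterSystem.IsReduced
            rw [htake, wordProd_append, wordProd_singleton, List.length_append,
              List.length_singleton, hlenk, h]
          have hne2 := cs.length_mul_simple_ne (π (ω.take k)) (ω[k])
          have hcases := cs.length_mul_simple (π (ω.take k)) (ω[k])
          rw [hlred] at hne2 hcases ⊢
          omega
        obtain ⟨j, hj, hjep⟩ := strong_exchange cs hkred (cs.isReflection_simple (ω[k])) hlt
        rw [hlenk] at hj
        set ω₂ := (ω.take k).eraseIdx j ++ ω.drop (k + 1) with hω₂
        have hsub2 : ω₂.Sublist ω := by
          have h1 : ((ω.take k).eraseIdx j).Sublist (ω.take (k + 1)) := by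
            apply List.Sublist.trans (List.eraseIdx_sublist _ j)
            rw [htake]
            exact List.sublist_append_left _ _
          have h2 := List.Sublist.append h1 (List.Sublist.refl (ω.drop (k + 1)))
          rwa [List.take_append_drop] at h2
        have hprod2 : π ω₂ = π ω := by
          rw [hω₂, wordProd_append, hjep, ← wordProd_singleton, ← wordProd_append,
            ← wordProd_append, ← htake, List.take_append_drop]
        have hlen2 : ω₂.length ≤ n := by
          have e1 : ((ω.take k).eraseIdx j).length + 1 = (ω.take k).length :=
            List.length_eraseIdx_add_one (by rw [hlenk]; exact hj)
          have e2 : ω₂.length = ((ω.take k).eraseIdx j).length + (ω.drop (k+1)).length := by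
            rw [hω₂]; exact List.length_append
          have e3 : (ω.drop (k+1)).length = ω.length - (k+1) := List.length_drop
          omega
        obtain ⟨ω', hsub', hred', hprod'⟩ := ihn ω₂ hlen2
        exact ⟨ω', hsub'.trans hsub2, hred', by rw [hprod', hprod2]⟩

lemma deletion (ω : List B) :
    ∃ ω' : List B, ω'.Sublist ω ∧ cs.IsReduced ω' ∧ π ω' = π ω :=
  deletion_aux cs ω.length ω le_rfl

lemma step_simple_left (i : B) (v : W) (h : ℓ v < ℓ (σ i * v)) :
    CoxBruhatStep cs v (σ i * v) :=
  ⟨v⁻¹ * σ i * v, ⟨v⁻¹, i, by rw [inv_inv]⟩, by group, h⟩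

lemma le_step {x y : W} (h : CoxBruhatStep cs x y) : CoxBruhatLE cs x y :=
  Relation.ReflTransGen.single h

lemma bruhat_Z0 {z v : W} (h : CoxBruhatStep cs z v) (i : B) :
    CoxBruhatLE cs (σ i * z) v ∨ CoxBruhatLE cs (σ i * z) (σ i * v) := by
  obtain ⟨t, ht, rfl, hlt⟩ := h
  rcases (cs.length_simple_mul_ne z i).lt_or_gt with hlt2 | hgt2
  · -- ℓ (σ i * z) < ℓ z
    left
    have h1 : CoxBruhatStep cs (σ i * z) z := by
      have h2 := step_simple_left cs i (σ i * z)
        (by rw [← mul_assoc, cs.simple_mul_simple_self i, one_mul]; exact hlt2)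
      rwa [← mul_assoc, cs.simple_mul_simple_self i, one_mul] at h2
    exact Relation.ReflTransGen.trans (le_step cs h1) (le_step cs ⟨t, ht, rfl, hlt⟩)
  · by_cases h3 : ℓ (σ i * z) < ℓ (σ i * z * t)
    · right
      exact le_step cs ⟨t, ht, by rw [mul_assoc], by rwa [← mul_assoc]⟩
    · push_neg at h3
      have h3' : ℓ (σ i * z * t) < ℓ (σ i * z) :=
        h3.lt_of_ne (ht.length_mul_left_ne (σ i * z))
      obtain ⟨σw, hσred, hσ⟩ := cs.exists_reduced_word' z
      have hlz : ℓ z = σw.length := by rw [hσ, hσred]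
      have hlsiz : ℓ (σ i * z) = ℓ z + 1 := by
        have hc := cs.length_simple_mul z i
        omega
      have hred2 : cs.IsReduced (i :: σw) := by
        unfold CoxeterSystem.IsReduced
        rw [wordProd_cons, ← hσ, List.length_cons, hlsiz, hlz]
      have hlen3 : ℓ (π (i :: σw) * t) < ℓ (π (i :: σw)) := by
        rw [wordProd_cons, ← hσ]
        exact h3'
      obtain ⟨j, hj, hjep⟩ := strong_exchange cs hred2 ht hlen3
      rcases j with _ | j
      · left
        rw [List.eraseIdx_cons_zero, wordProd_cons, ← hσ] at hjep
        have hzv : z * t = σ i * z := by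
          conv_lhs => rw [hjep]
          rw [mul_assoc, ht.mul_self, mul_one]
        rw [hzv]
        exact Relation.ReflTransGen.refl
      · exfalso
        rw [List.eraseIdx_cons_succ, wordProd_cons, wordProd_cons, ← hσ, mul_assoc] at hjep
        have hzt : π (σw.eraseIdx j) = z * t := mul_left_cancel hjep
        have h4 : ℓ (z * t) ≤ (σw.eraseIdx j).length := by
          rw [← hzt]
          exact cs.length_wordProd_le _
        have h5 : (σw.eraseIdx j).length + 1 = σw.length :=
          List.length_eraseIdx_add_one (by simpa using hj)
        omega

lemma bruhat_Z {u v : W} (h : CoxBruhatLE cs u v) (i : B) :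
    CoxBruhatLE cs (σ i * u) v ∨ CoxBruhatLE cs (σ i * u) (σ i * v) := by
  induction h with
  | refl => right; exact Relation.ReflTransGen.refl
  | tail hab hbc ih =>
      rcases ih with h1 | h1
      · left
        exact h1.trans (le_step cs hbc)
      · rcases bruhat_Z0 cs hbc i with h2 | h2
        · left; exact h1.trans h2
        · right; exact h1.trans h2

lemma subword_le : ∀ {ω ω' : List B}, cs.IsReduced ω → ω'.Sublist ω → cs.IsReduced ω' →
    CoxBruhatLE cs (π ω') (π ω) := by
  intro ω
  induction ω with
  | nil =>
      intro ω' _ hsub _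
      rw [List.sublist_nil.mp hsub]
      exact Relation.ReflTransGen.refl
  | cons i σw ih =>
      intro ω' hred hsub hred'
      have hσred : cs.IsReduced σw := by
        simpa using CoxeterSystem.IsReduced.drop (cs := cs) (ω := i :: σw) hred 1
      have hstep : CoxBruhatStep cs (π σw) (π (i :: σw)) := by
        rw [wordProd_cons]
        apply step_simple_left
        rw [← wordProd_cons]
        calc ℓ (π σw) ≤ σw.length := cs.length_wordProd_le σw
          _ < (i :: σw).length := by simp
          _ = ℓ (π (i :: σw)) := by rw [hred]
      cases hsub with
      | cons _ h1 => exact (ih hσred h1 hred').trans (le_step cs hstep)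
      | cons_cons _ h1 =>
          rename_i l₁
          have hl₁red : cs.IsReduced l₁ := by
            simpa using CoxeterSystem.IsReduced.drop (cs := cs) (ω := i :: l₁) hred' 1
          rcases bruhat_Z cs (ih hσred h1 hl₁red) i with h2 | h2
          · rw [wordProd_cons]
            exact h2.trans (le_step cs hstep)
          · rw [wordProd_cons, wordProd_cons]
            exact h2

end CoxSubwordAux



open CoxSubwordAux

/-- Subword property of the Bruhat order: `x ≤ y` if and only if every reduced expression
for `y` has a subword which is a reduced expression for `x`. -/
theorem bruhatLE_iff_subword (cs : CoxeterSystem M W) (x y : W) :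
    CoxBruhatLE cs x y ↔
      ∀ ω : List B, cs.IsReduced ω → cs.wordProd ω = y →
        ∃ ω' : List B, ω'.Sublist ω ∧ cs.IsReduced ω' ∧ cs.wordProd ω' = x := by
  constructor
  · intro h
    induction h with
    | refl =>
        intro ω hred hπ
        exact ⟨ω, List.Sublist.refl ω, hred, hπ⟩
    | @tail b c hab hbc ih =>
        intro ω hred hπ
        obtain ⟨t, ht, rfl, hlen⟩ := hbc
        have hl2 : cs.length (cs.wordProd ω * t) < cs.length (cs.wordProd ω) := by
          rw [hπ, mul_assoc, ht.mul_self, mul_one]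
          exact hlen
        obtain ⟨j, hj, hjep⟩ := strong_exchange cs hred ht hl2
        obtain ⟨ω₂, hsub₂, hred₂, hprod₂⟩ := deletion cs (ω.eraseIdx j)
        have hb : cs.wordProd ω₂ = b := by
          rw [hprod₂, hjep, hπ, mul_assoc, ht.mul_self, mul_one]
        obtain ⟨ω', hsub', hred', hprod'⟩ := ih ω₂ hred₂ hb
        exact ⟨ω', hsub'.trans (hsub₂.trans (List.eraseIdx_sublist ω j)), hred', hprod'⟩
  · intro h
    obtain ⟨ω, hred, hπ⟩ := cs.exists_reduced_word' y
    obtain ⟨ω', hsub, hred', hπ'⟩ := h ω hred hπ.symm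
    have := subword_le cs hred hsub hred'
    rwa [hπ', ← hπ] at this
end
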